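/- arXiv:math/0407127 — 3 statements merged into one kernel-verified Lean document; each statement's English description precedes it below -/
import Mathlib

section
/- For every λ ∈ (0,1) there exists ε > 0 such that for all capital levels v ∈ (0, ε], the constant β in the representation X*(v) = β + (I(c(φ ∨ y)) − I(cy)) ∧ (K − β) of the unique solution of the Neyman–Pearson problem for ρ_λ at level v equals 0 (equivalently, the essential infimum of X*(v) is 0). -/
open MeasureTheory Filter Topology Set

/-- The probability space `(Ω, 𝓕, P)` is atomless. -/
def Atomless {Ω : Type*} [MeasurableSpace Ω] (P : Measure Ω) : Prop :=
  ∀ A : Set Ω, MeasurableSet A → 0 < P A →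
    ∃ B : Set Ω, MeasurableSet B ∧ B ⊆ A ∧ 0 < P B ∧ P B < P A

/-- Feasibility for the Neyman–Pearson problem at level `v`:
`X ∈ L^∞`, `0 ≤ X ≤ K` P-a.s. and `E[φX] ≥ v`. -/
def Feasible {Ω : Type*} [MeasurableSpace Ω] (P : Measure Ω) (φ : Ω → ℝ) (K v : ℝ)
    (X : Ω → ℝ) : Prop :=
  MemLp X ⊤ P ∧ (∀ᵐ ω ∂P, 0 ≤ X ω ∧ X ω ≤ K) ∧ v ≤ ∫ ω, φ ω * X ω ∂P

/-- `ρ_λ(−X) = max_{Q ∈ 𝒬_λ} E_Q[ℓ(X)]`, where `𝒬_λ` is the set of probability measures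
`Q ≪ P` with `dQ/dP ≤ 1/λ` P-a.s.  (The value `rhoLam P λ ℓ X` represents `ρ_λ(−X)`.) -/
noncomputable def rhoLam {Ω : Type*} [MeasurableSpace Ω] (P : Measure Ω) (lam : ℝ)
    (ℓ : ℝ → ℝ) (X : Ω → ℝ) : ℝ :=
  sSup {r : ℝ | ∃ Q : Measure Ω, IsProbabilityMeasure Q ∧ Q ≪ P ∧
    (∀ᵐ ω ∂P, Q.rnDeriv P ω ≤ ENNReal.ofReal (1 / lam)) ∧ r = ∫ ω, ℓ (X ω) ∂Q}

/-- A solution of the Neyman–Pearson problem for `ρ_λ` at level `v`: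
minimize `ρ_λ(−X)` over `X ∈ L^∞` with `0 ≤ X ≤ K` P-a.s. and `E[φX] ≥ v`. -/
def IsLamSolution {Ω : Type*} [MeasurableSpace Ω] (P : Measure Ω) (lam : ℝ) (ℓ : ℝ → ℝ)
    (φ : Ω → ℝ) (K v : ℝ) (X : Ω → ℝ) : Prop :=
  Feasible P φ K v X ∧
    ∀ Y : Ω → ℝ, Feasible P φ K v Y → rhoLam P lam ℓ X ≤ rhoLam P lam ℓ Y

/-- The characterizing properties of the extension `I : ℝ → [−∞,∞]` of the inverse of `ℓ′`:
`I = (ℓ′)⁻¹` on the range `(a,b)` of `ℓ′`, `I = +∞` above `b` and `I = −∞` below `a`. -/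
def IsExtendedInverse (ℓ : ℝ → ℝ) (I : ℝ → EReal) : Prop :=
  (∀ x : ℝ, I (deriv ℓ x) = (x : EReal)) ∧
  (∀ z : ℝ, (∀ x : ℝ, deriv ℓ x < z) → I z = ⊤) ∧
  (∀ z : ℝ, (∀ x : ℝ, z < deriv ℓ x) → I z = ⊥)

/-- The representation `X* = β + (I(c(φ ∨ y)) − I(cy)) ∧ (K − β)` P-a.s.,
with `β ≥ 0`, `y ≥ q` and `c = ℓ′(β)/y`. -/
def LamForm {Ω : Type*} [MeasurableSpace Ω] (P : Measure Ω) (φ : Ω → ℝ) (ℓ : ℝ → ℝ)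
    (I : ℝ → EReal) (K q : ℝ) (X : Ω → ℝ) (β y c : ℝ) : Prop :=
  0 ≤ β ∧ q ≤ y ∧ c = deriv ℓ β / y ∧
    ∀ᵐ ω ∂P, X ω =
      β + (min (I (c * max (φ ω) y) - I (c * y)) (((K - β : ℝ) : EReal))).toReal

section Helpers


variable {ℓ : ℝ → ℝ}

/-- Derivative bounds from the mean value theorem for a `C¹` function with monotone
derivative. -/
lemma NPaux.mvt_bounds (hC1 : ContDiff ℝ 1 ℓ) (hm : Monotone (deriv ℓ))
    {a b : ℝ} (hab : a ≤ b) :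
    deriv ℓ a * (b - a) ≤ ℓ b - ℓ a ∧ ℓ b - ℓ a ≤ deriv ℓ b * (b - a) := by
  rcases eq_or_lt_of_le hab with rfl | h
  · simp
  · obtain ⟨ξ, hξ, hξeq⟩ := exists_deriv_eq_slope ℓ h (hC1.continuous.continuousOn)
      ((hC1.differentiable one_ne_zero).differentiableOn)
    have hba : 0 < b - a := by linarith
    have h1 : deriv ℓ a ≤ deriv ℓ ξ := hm hξ.1.le
    have h2 : deriv ℓ ξ ≤ deriv ℓ b := hm hξ.2.le
    have : ℓ b - ℓ a = deriv ℓ ξ * (b - a) := by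
      field_simp at hξeq
      linarith [hξeq]
    constructor
    · rw [this]; nlinarith
    · rw [this]; nlinarith

lemma NPaux.strictMono_deriv (hconv : StrictConvexOn ℝ univ ℓ) (hC1 : ContDiff ℝ 1 ℓ) :
    StrictMono (deriv ℓ) := fun a b hab =>
  hconv.strictMonoOn_deriv (fun x _ => (hC1.differentiable one_ne_zero).differentiableAt)
    (mem_univ a) (mem_univ b) hab

/-- Lower bound for the extended inverse. -/
lemma NPaux.le_I {I : ℝ → EReal} (hI : IsExtendedInverse ℓ I)
    (hm : StrictMono (deriv ℓ)) (hcont : Continuous (deriv ℓ))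
    {t z : ℝ} (h : deriv ℓ t ≤ z) : (t : EReal) ≤ I z := by
  by_cases hz : ∃ x, deriv ℓ x = z
  · obtain ⟨x, hx⟩ := hz
    rw [← hx, hI.1 x]
    exact_mod_cast (hm.le_iff_le).mp (hx ▸ h)
  · have hall : ∀ x, deriv ℓ x < z := by
      intro x
      rcases lt_trichotomy (deriv ℓ x) z with h1 | h1 | h1
      · exact h1
      · exact absurd ⟨x, h1⟩ hz
      · -- z between deriv ℓ t and deriv ℓ x : IVT gives a preimage
        exfalso
        have htx : t < x := by
          by_contra hc
          push_neg at hc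
          exact absurd (hm.le_iff_le.mpr hc) (not_le.mpr (lt_of_le_of_lt h h1))
        have := intermediate_value_Icc htx.le (hcont.continuousOn (s := Icc t x))
        have hmem : z ∈ Icc (deriv ℓ t) (deriv ℓ x) := ⟨h, h1.le⟩
        obtain ⟨ξ, _, hξ⟩ := this hmem
        exact hz ⟨ξ, hξ⟩
    rw [hI.2.1 z hall]
    exact le_top

end Helpers

section RhoHelpers

variable {Ω : Type*} [MeasurableSpace Ω] {P : Measure Ω} [IsProbabilityMeasure P]
  {lam : ℝ} {ℓ : ℝ → ℝ}

/-- Admissible test measures for `rhoLam`. -/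
def NPadm (P : Measure Ω) (lam : ℝ) (Q : Measure Ω) : Prop :=
  IsProbabilityMeasure Q ∧ Q ≪ P ∧
    (∀ᵐ ω ∂P, Q.rnDeriv P ω ≤ ENNReal.ofReal (1 / lam))

lemma NPadm.self (hlam : lam ∈ Ioo (0:ℝ) 1) : NPadm P lam P := by
  refine ⟨inferInstance, Measure.AbsolutelyContinuous.rfl, ?_⟩
  filter_upwards [Measure.rnDeriv_self P] with ω hω
  rw [hω, show (1 : ENNReal) = ENNReal.ofReal 1 by simp]
  refine ENNReal.ofReal_le_ofReal ?_
  rw [le_div_iff₀ hlam.1]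
  nlinarith [hlam.1, hlam.2]

omit [IsProbabilityMeasure P] in
/-- Transfer an a.e. statement from `P` to an admissible `Q`. -/
lemma NPadm.ae {Q : Measure Ω} (hQ : NPadm P lam Q) {p : Ω → Prop}
    (h : ∀ᵐ ω ∂P, p ω) : ∀ᵐ ω ∂Q, p ω :=
  hQ.2.1.ae_le h

omit [IsProbabilityMeasure P] in
lemma NPadm.integrable_comp {Q : Measure Ω} (hQ : NPadm P lam Q) (hℓc : Continuous ℓ)
    (hℓm : Monotone ℓ) {X : Ω → ℝ} (hXm : AEStronglyMeasurable X P) {K : ℝ}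
    (hXb : ∀ᵐ ω ∂P, 0 ≤ X ω ∧ X ω ≤ K) :
    Integrable (fun ω => ℓ (X ω)) Q := by
  have : IsProbabilityMeasure Q := hQ.1
  have hXmQ : AEStronglyMeasurable X Q := hXm.mono_ac hQ.2.1
  refine Integrable.mono' (integrable_const (max |ℓ 0| |ℓ K|))
    (hℓc.comp_aestronglyMeasurable hXmQ) ?_
  filter_upwards [hQ.ae hXb] with ω hω
  have h1 : ℓ 0 ≤ ℓ (X ω) := hℓm hω.1
  have h2 : ℓ (X ω) ≤ ℓ K := hℓm hω.2
  simp only [Real.norm_eq_abs]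
  refine abs_le.mpr ⟨?_, ?_⟩
  · have := neg_abs_le (ℓ 0); have := le_max_left |ℓ 0| |ℓ K|; linarith
  · have := le_abs_self (ℓ K); have := le_max_right |ℓ 0| |ℓ K|; linarith

/-- Bound on `Q`-measures for admissible `Q`. -/
lemma NPadm.meas_le {Q : Measure Ω} (hQ : NPadm P lam Q) (hlam : 0 < lam)
    {A : Set Ω} (hA : MeasurableSet A) :
    (Q A).toReal ≤ (P A).toReal / lam := by
  have : IsProbabilityMeasure Q := hQ.1
  have h1 : Q A = ∫⁻ ω in A, Q.rnDeriv P ω ∂P :=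
    (Measure.setLIntegral_rnDeriv hQ.2.1 A).symm
  have h2 : ∫⁻ ω in A, Q.rnDeriv P ω ∂P ≤ ∫⁻ _ in A, ENNReal.ofReal (1/lam) ∂P :=
    lintegral_mono_ae (ae_restrict_of_ae hQ.2.2)
  have h3 : ∫⁻ _ in A, ENNReal.ofReal (1/lam) ∂P = ENNReal.ofReal (1/lam) * P A := by
    simp [Measure.restrict_apply_univ]
  have h4 : Q A ≤ ENNReal.ofReal (1/lam) * P A := by
    rw [h1]; exact h2.trans (le_of_eq h3)
  have h5 : (ENNReal.ofReal (1/lam) * P A).toReal = (P A).toReal / lam := by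
    rw [ENNReal.toReal_mul, ENNReal.toReal_ofReal (by positivity)]
    ring
  calc (Q A).toReal ≤ (ENNReal.ofReal (1/lam) * P A).toReal :=
        ENNReal.toReal_mono (ENNReal.mul_ne_top ENNReal.ofReal_ne_top (measure_ne_top P A)) h4
    _ = (P A).toReal / lam := h5

/-- Lower bound on `Q`-measures for admissible `Q`. -/
lemma NPadm.meas_ge {Q : Measure Ω} (hQ : NPadm P lam Q) (hlam : 0 < lam)
    {A : Set Ω} (hA : MeasurableSet A) :
    1 - (P Aᶜ).toReal / lam ≤ (Q A).toReal := by
  have : IsProbabilityMeasure Q := hQ.1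
  have h1 : (Q Aᶜ).toReal ≤ (P Aᶜ).toReal / lam := hQ.meas_le hlam hA.compl
  have h2 : (Q A).toReal + (Q Aᶜ).toReal = 1 := by
    rw [← ENNReal.toReal_add (measure_ne_top Q A) (measure_ne_top Q Aᶜ),
      measure_add_measure_compl hA]
    simp
  linarith

/-- Any admissible integral of `ℓ ∘ X` belongs to the defining set of `rhoLam`. -/
lemma NPadm.mem_rhoSet {Q : Measure Ω} (hQ : NPadm P lam Q) (X : Ω → ℝ) :
    (∫ ω, ℓ (X ω) ∂Q) ∈ {r : ℝ | ∃ Q' : Measure Ω, IsProbabilityMeasure Q' ∧ Q' ≪ P ∧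
      (∀ᵐ ω ∂P, Q'.rnDeriv P ω ≤ ENNReal.ofReal (1 / lam)) ∧ r = ∫ ω, ℓ (X ω) ∂Q'} :=
  ⟨Q, hQ.1, hQ.2.1, hQ.2.2, rfl⟩

omit [IsProbabilityMeasure P] in
lemma NPadm.integral_le {Q : Measure Ω} (hQ : NPadm P lam Q) (hℓc : Continuous ℓ)
    (hℓm : Monotone ℓ) {X : Ω → ℝ} (hXm : AEStronglyMeasurable X P) {K : ℝ}
    (hXb : ∀ᵐ ω ∂P, 0 ≤ X ω ∧ X ω ≤ K) :
    ∫ ω, ℓ (X ω) ∂Q ≤ ℓ K := by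
  have : IsProbabilityMeasure Q := hQ.1
  calc ∫ ω, ℓ (X ω) ∂Q ≤ ∫ _, ℓ K ∂Q := by
        refine integral_mono_ae (hQ.integrable_comp hℓc hℓm hXm hXb) (integrable_const _) ?_
        filter_upwards [hQ.ae hXb] with ω hω using hℓm hω.2
    _ = ℓ K := by simp

/-- The defining set of `rhoLam` is bounded above for a bounded payoff. -/
lemma NPrho_bddAbove (hℓc : Continuous ℓ) (hℓm : Monotone ℓ) {X : Ω → ℝ}
    (hXm : AEStronglyMeasurable X P) {K : ℝ}
    (hXb : ∀ᵐ ω ∂P, 0 ≤ X ω ∧ X ω ≤ K) :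
    ∀ r ∈ {r : ℝ | ∃ Q' : Measure Ω, IsProbabilityMeasure Q' ∧ Q' ≪ P ∧
      (∀ᵐ ω ∂P, Q'.rnDeriv P ω ≤ ENNReal.ofReal (1 / lam)) ∧ r = ∫ ω, ℓ (X ω) ∂Q'},
      r ≤ ℓ K := by
  rintro r ⟨Q, hQ1, hQ2, hQ3, rfl⟩
  exact NPadm.integral_le ⟨hQ1, hQ2, hQ3⟩ hℓc hℓm hXm hXb

lemma NPrho_ge {Q : Measure Ω} (hQ : NPadm P lam Q) (hℓc : Continuous ℓ)
    (hℓm : Monotone ℓ) {X : Ω → ℝ} (hXm : AEStronglyMeasurable X P) {K : ℝ}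
    (hXb : ∀ᵐ ω ∂P, 0 ≤ X ω ∧ X ω ≤ K) :
    ∫ ω, ℓ (X ω) ∂Q ≤ rhoLam P lam ℓ X :=
  le_csSup ⟨ℓ K, NPrho_bddAbove hℓc hℓm hXm hXb⟩ (hQ.mem_rhoSet X)

lemma NPrho_le (hlam : lam ∈ Ioo (0:ℝ) 1) {X : Ω → ℝ} {M : ℝ}
    (h : ∀ Q : Measure Ω, NPadm P lam Q → ∫ ω, ℓ (X ω) ∂Q ≤ M) :
    rhoLam P lam ℓ X ≤ M := by
  refine csSup_le ⟨∫ ω, ℓ (X ω) ∂P, (NPadm.self hlam).mem_rhoSet X⟩ ?_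
  rintro r ⟨Q, hQ1, hQ2, hQ3, rfl⟩
  exact h Q ⟨hQ1, hQ2, hQ3⟩

end RhoHelpers

section FormHelpers

lemma NPereal_lower {β K : ℝ} (W : EReal) (hW : (β : EReal) ≤ W) :
    min β K ≤ β + (min (W - (β : EReal)) ((K - β : ℝ) : EReal)).toReal := by
  induction W using EReal.rec with
  | bot => exact absurd (le_bot_iff.mp hW) (EReal.coe_ne_bot β)
  | coe w =>
    have hwβ : β ≤ w := by exact_mod_cast hW
    rw [show (w : EReal) - (β : EReal) = ((w - β : ℝ) : EReal) from (EReal.coe_sub _ _).symm]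
    have hminc : min ((w - β : ℝ) : EReal) ((K - β : ℝ) : EReal)
        = ((min (w - β) (K - β) : ℝ) : EReal) := by
      rcases le_total (w - β) (K - β) with h | h
      · rw [min_eq_left (by exact_mod_cast h), min_eq_left h]
      · rw [min_eq_right (by exact_mod_cast h), min_eq_right h]
    rw [hminc, EReal.toReal_coe]
    rcases le_total β K with h | h
    · have : min 0 (K - β) ≤ min (w - β) (K - β) := min_le_min (by linarith) le_rfl
      rw [min_eq_left h]
      rw [min_eq_left (by linarith : (0:ℝ) ≤ K - β)] at this
      linarith
    · have : min 0 (K - β) ≤ min (w - β) (K - β) := min_le_min (by linarith) le_rfl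
      rw [min_eq_right h]
      rw [min_eq_right (by linarith : K - β ≤ (0:ℝ))] at this
      linarith
  | top =>
    rw [EReal.top_sub_coe, min_eq_right (le_top : ((K - β : ℝ) : EReal) ≤ ⊤), EReal.toReal_coe]
    have : min β K ≤ K := min_le_right _ _
    linarith

lemma NPereal_top {β K : ℝ} (W : EReal) (hW : (K : EReal) ≤ W) :
    β + (min (W - (β : EReal)) ((K - β : ℝ) : EReal)).toReal = K := by
  induction W using EReal.rec with
  | bot => exact absurd (le_bot_iff.mp hW) (EReal.coe_ne_bot K)
  | coe w =>
    have hwK : K ≤ w := by exact_mod_cast hW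
    rw [show (w : EReal) - (β : EReal) = ((w - β : ℝ) : EReal) from (EReal.coe_sub _ _).symm,
      min_eq_right (by exact_mod_cast (by linarith : K - β ≤ w - β)), EReal.toReal_coe]
    ring
  | top =>
    rw [EReal.top_sub_coe, min_eq_right (le_top : ((K - β : ℝ) : EReal) ≤ ⊤), EReal.toReal_coe]
    ring

/-- Pointwise consequences of the `LamForm` representation. -/
lemma NPform_cases {ℓ : ℝ → ℝ} {I : ℝ → EReal} (hI : IsExtendedInverse ℓ I)
    (hm : StrictMono (deriv ℓ)) (hcont : Continuous (deriv ℓ))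
    {β y c K φω Xω : ℝ} (hy : 0 < y) (hc : c = deriv ℓ β / y) (hβd : 0 < deriv ℓ β)
    (hX : Xω = β + (min (I (c * max φω y) - I (c * y)) (((K - β : ℝ) : EReal))).toReal) :
    min β K ≤ Xω ∧ (φω ≤ y → Xω = min β K) ∧
      (y * deriv ℓ K / deriv ℓ β ≤ φω → Xω = K) := by
  have hyne : y ≠ 0 := hy.ne'
  have hβdne : deriv ℓ β ≠ 0 := hβd.ne'
  have hcy : c * y = deriv ℓ β := by rw [hc]; field_simp
  have hIcy : I (c * y) = (β : EReal) := by rw [hcy]; exact hI.1 β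
  have hc0 : 0 < c := by rw [hc]; positivity
  refine ⟨?_, ?_, ?_⟩
  · -- lower bound
    have hW : (β : EReal) ≤ I (c * max φω y) := by
      refine NPaux.le_I hI hm hcont ?_
      calc deriv ℓ β = c * y := hcy.symm
        _ ≤ c * max φω y := mul_le_mul_of_nonneg_left (le_max_right _ _) hc0.le
    rw [hX, hIcy]
    exact NPereal_lower _ hW
  · -- on the floor
    intro hφy
    rw [hX, max_eq_right hφy, hIcy,
      show (β : EReal) - (β : EReal) = ((0 : ℝ) : EReal) from by
        rw [← EReal.coe_sub]; norm_num]
    rcases le_total β K with h | h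
    · rw [min_eq_left (by exact_mod_cast (by linarith : (0:ℝ) ≤ K - β)), min_eq_left h]
      simp
    · rw [min_eq_right (by exact_mod_cast (by linarith : K - β ≤ (0:ℝ))), min_eq_right h,
        EReal.toReal_coe]
      ring
  · -- at the top
    intro hφ
    have hz : deriv ℓ K ≤ c * max φω y := by
      have h1 : c * (y * deriv ℓ K / deriv ℓ β) = deriv ℓ K := by rw [hc]; field_simp
      calc deriv ℓ K = c * (y * deriv ℓ K / deriv ℓ β) := h1.symm
        _ ≤ c * φω := mul_le_mul_of_nonneg_left hφ hc0.le
        _ ≤ c * max φω y := mul_le_mul_of_nonneg_left (le_max_left _ _) hc0.le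
    have hWK : (K : EReal) ≤ I (c * max φω y) := NPaux.le_I hI hm hcont hz
    rw [hX, hIcy]
    exact NPereal_top _ hWK

end FormHelpers

section Engine

variable {Ω : Type*} [MeasurableSpace Ω] {P : Measure Ω} [IsProbabilityMeasure P]
  {lam : ℝ} {ℓ : ℝ → ℝ}

/-- If some feasible competitor has uniformly smaller admissible integrals, the solution
property fails. -/
lemma NPcontra (hlam : lam ∈ Ioo (0:ℝ) 1) (hℓc : Continuous ℓ) (hℓm : Monotone ℓ)
    {φ : Ω → ℝ} {K v : ℝ} {X Y : Ω → ℝ} (hSol : IsLamSolution P lam ℓ φ K v X)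
    (hYfeas : Feasible P φ K v Y) {gap : ℝ} (hgap : 0 < gap)
    (h : ∀ Q : Measure Ω, NPadm P lam Q →
      ∫ ω, ℓ (Y ω) ∂Q ≤ ∫ ω, ℓ (X ω) ∂Q - gap) : False := by
  have hXm : AEStronglyMeasurable X P := hSol.1.1.aestronglyMeasurable
  have hXb := hSol.1.2.1
  have h2 : rhoLam P lam ℓ Y ≤ rhoLam P lam ℓ X - gap :=
    NPrho_le hlam fun Q hQ =>
      (h Q hQ).trans (sub_le_sub_right (NPrho_ge hQ hℓc hℓm hXm hXb) gap)
  have h3 := hSol.2 Y hYfeas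
  linarith

/-- Markov inequality in the form we need. -/
lemma NPmarkov {φ : Ω → ℝ} (hφm : Measurable φ) (hφint : Integrable φ P)
    (hφ0 : ∀ᵐ ω ∂P, 0 ≤ φ ω) (hφ1 : ∫ ω, φ ω ∂P = 1) {t : ℝ} (ht : 0 < t) :
    (P {ω | t < φ ω}).toReal ≤ 1 / t := by
  have hA : MeasurableSet {ω | t < φ ω} := measurableSet_lt measurable_const hφm
  have hPA : P {ω | t < φ ω} ≠ ⊤ := measure_ne_top P _
  have h1 : t * (P {ω | t < φ ω}).toReal = ∫ _ω in {ω | t < φ ω}, t ∂P := by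
    rw [setIntegral_const]; rw [smul_eq_mul]; rw [measureReal_def]; ring
  have h2 : ∫ _ω in {ω | t < φ ω}, t ∂P ≤ ∫ ω in {ω | t < φ ω}, φ ω ∂P := by
    refine setIntegral_mono_on (integrableOn_const ?_) hφint.integrableOn hA
      (fun ω hω => le_of_lt hω)
    exact hPA
  have h3 : ∫ ω in {ω | t < φ ω}, φ ω ∂P ≤ ∫ ω, φ ω ∂P := setIntegral_le_integral hφint hφ0
  rw [hφ1] at h3
  rw [le_div_iff₀ ht]
  nlinarith [h1, h2, h3]

end Engine

set_option maxHeartbeats 2000000 in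
/-- Lemma 3.3: for every `λ ∈ (0,1)` there exists `ε > 0` such that for
all capital levels `v ∈ (0, ε]`, the constant `β` in the representation of the unique
solution of the Neyman–Pearson problem for `ρ_λ` at level `v` equals `0`. -/
theorem rhoLam_beta_zero_for_small_levels
    {Ω : Type*} [MeasurableSpace Ω] (P : Measure Ω) [IsProbabilityMeasure P]
    (hP : Atomless P)
    (φ : Ω → ℝ) (hφm : Measurable φ) (hφint : Integrable φ P)
    (hφpos : ∀ᵐ ω ∂P, 0 < φ ω) (hφ1 : ∫ ω, φ ω ∂P = 1)
    (hφunb : ∀ M : ℝ, 0 < P {ω | M < φ ω})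
    (hFcont : ContinuousOn (fun x : ℝ => (P {ω | φ ω ≤ x}).toReal) (Ioi 0))
    (hFmono : StrictMonoOn (fun x : ℝ => (P {ω | φ ω ≤ x}).toReal) (Ioi 0))
    (K : ℝ) (hK : 0 < K) (lam : ℝ) (hlam : lam ∈ Ioo (0:ℝ) 1)
    (ℓ : ℝ → ℝ) (hℓconv : StrictConvexOn ℝ univ ℓ) (hℓmono : StrictMono ℓ)
    (hℓC1 : ContDiff ℝ 1 ℓ) (hℓ'pos : ∀ x : ℝ, 0 < deriv ℓ x)
    (I : ℝ → EReal) (hI : IsExtendedInverse ℓ I)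
    (q : ℝ) (hq : (P {ω | φ ω < q}).toReal ≤ 1 - lam ∧
      1 - lam ≤ (P {ω | φ ω ≤ q}).toReal) :
    ∃ ε : ℝ, 0 < ε ∧ ∀ v : ℝ, 0 < v → v ≤ ε →
      ∀ X : Ω → ℝ, ∀ β y c : ℝ,
        IsLamSolution P lam ℓ φ K v X → LamForm P φ ℓ I K q X β y c → β = 0 := by
  have hlam0 : 0 < lam := hlam.1
  have hlam1 : lam < 1 := hlam.2
  have hsm : StrictMono (deriv ℓ) := NPaux.strictMono_deriv hℓconv hℓC1
  have hmono' : Monotone (deriv ℓ) := hsm.monotone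
  have hcd : Continuous (deriv ℓ) := hℓC1.continuous_deriv le_rfl
  have hℓc : Continuous ℓ := hℓC1.continuous
  have hℓm : Monotone ℓ := hℓmono.monotone
  have hL0pos : 0 < deriv ℓ 0 := hℓ'pos 0
  have hLKpos : 0 < deriv ℓ K := hℓ'pos K
  have hL0LK : deriv ℓ 0 ≤ deriv ℓ K := hmono' hK.le
  have hφ0 : ∀ᵐ ω ∂P, 0 ≤ φ ω := hφpos.mono fun ω h => h.le
  have hnullneg : P {ω | ¬ 0 < φ ω} = 0 := ae_iff.mp hφpos
  -- the quantile is positive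
  have hq0 : 0 < q := by
    by_contra hq0
    push_neg at hq0
    have hsub : {ω | φ ω ≤ q} ⊆ {ω | ¬ 0 < φ ω} := by
      intro ω hω; simp only [mem_setOf_eq, not_lt] at *; linarith
    have h0 : P {ω | φ ω ≤ q} = 0 := measure_mono_null hsub hnullneg
    rw [h0] at hq
    simp at hq
    linarith [hq.2]
  -- the reserve of mass at low values of φ
  set m0 : ℝ := ∫ ω in {ω | φ ω ≤ q}, φ ω ∂P with hm0def
  have hPq : 0 < P {ω | φ ω ≤ q} := by
    rw [pos_iff_ne_zero]
    intro h0
    rw [h0] at hq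
    simp at hq
    linarith [hq.2]
  have hm0pos : 0 < m0 := by
    rw [hm0def]
    rw [setIntegral_pos_iff_support_of_nonneg_ae (ae_restrict_of_ae hφ0) hφint.integrableOn]
    have h1 : {ω | φ ω ≤ q} ⊆ (Function.support φ ∩ {ω | φ ω ≤ q}) ∪ {ω | ¬ 0 < φ ω} := by
      intro ω hω
      by_cases h : 0 < φ ω
      · exact Or.inl ⟨ne_of_gt h, hω⟩
      · exact Or.inr h
    have h2 := (measure_mono h1).trans (measure_union_le (μ := P) _ _)
    rw [hnullneg, add_zero] at h2
    exact lt_of_lt_of_le hPq h2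
  have hm01 : m0 ≤ 1 := by
    rw [hm0def, ← hφ1]
    exact setIntegral_le_integral hφint hφ0
  -- fixed thresholds
  set y2 : ℝ := (2 * deriv ℓ K + 2 * deriv ℓ 0) / (deriv ℓ 0 * lam) with hy2def
  have hy2pos : 0 < y2 := by positivity
  set U : ℝ := y2 * deriv ℓ K / deriv ℓ 0 with hUdef
  have hUpos : 0 < U := by positivity
  set v2 : ℝ := K * U * (P {ω | U < φ ω}).toReal with hv2def
  have hv2pos : 0 < v2 := by
    have h1 : 0 < (P {ω | U < φ ω}).toReal :=
      ENNReal.toReal_pos (ne_of_gt (hφunb U)) (measure_ne_top P _)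
    positivity
  refine ⟨min (K * m0 / 4) (v2 / 2), lt_min (by positivity) (by positivity), ?_⟩
  intro v hv0 hvε X β y c hSol hForm
  by_contra hβne
  obtain ⟨hβ0, hqy, hcdef, hform⟩ := hForm
  have hβ : 0 < β := hβ0.lt_of_ne (Ne.symm hβne)
  have hy0 : 0 < y := lt_of_lt_of_le hq0 hqy
  have hβd : 0 < deriv ℓ β := hℓ'pos β
  have hXm : AEStronglyMeasurable X P := hSol.1.1.aestronglyMeasurable
  have hXb : ∀ᵐ ω ∂P, 0 ≤ X ω ∧ X ω ≤ K := hSol.1.2.1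
  have hvK : v ≤ K * m0 / 4 := hvε.trans (min_le_left _ _)
  have hvv2 : v ≤ v2 / 2 := hvε.trans (min_le_right _ _)
  -- pointwise facts from the representation
  have hforms : ∀ᵐ ω ∂P, min β K ≤ X ω ∧ (φ ω ≤ y → X ω = min β K) ∧
      (y * deriv ℓ K / deriv ℓ β ≤ φ ω → X ω = K) :=
    hform.mono fun ω hω => NPform_cases hI hsm hcd hy0 hcdef hβd hω
  -- integrability of the payoff
  have hφX : Integrable (fun ω => φ ω * X ω) P := by
    have h1 : Integrable (fun ω => X ω * φ ω) P :=
      hφint.bdd_mul hXm (hXb.mono fun ω h => by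
        rw [Real.norm_eq_abs]; exact abs_le.mpr ⟨by linarith [h.1], h.2⟩)
    exact h1.congr (ae_of_all _ fun ω => mul_comm _ _)
  have hφXnn : ∀ᵐ ω ∂P, 0 ≤ φ ω * X ω := by
    filter_upwards [hφ0, hXb] with ω h1 h2 using mul_nonneg h1 h2.1
  -- Step 1 : the capital constraint binds
  have hcapEq : ∫ ω, φ ω * X ω ∂P = v := by
    by_contra hne
    have hσ : 0 < ∫ ω, φ ω * X ω ∂P - v := by
      rcases lt_or_eq_of_le hSol.1.2.2 with h | h
      · linarith
      · exact absurd h.symm hne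
    set d : ℝ := min (min β K) (∫ ω, φ ω * X ω ∂P - v) with hddef
    have hdpos : 0 < d := lt_min (lt_min hβ hK) hσ
    have hdβK : d ≤ min β K := min_le_left _ _
    set Y : Ω → ℝ := fun ω => X ω - d with hYdef
    have hYb : ∀ᵐ ω ∂P, 0 ≤ Y ω ∧ Y ω ≤ K := by
      filter_upwards [hXb, hforms] with ω h1 h2
      exact ⟨by simp only [hYdef]; linarith [h2.1], by simp only [hYdef]; linarith [h1.2]⟩
    have hYm : AEStronglyMeasurable Y P := hXm.sub aestronglyMeasurable_const
    have hYfeas : Feasible P φ K v Y := by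
      refine ⟨memLp_top_of_bound hYm K (hYb.mono fun ω h => by
        rw [Real.norm_eq_abs]; exact abs_le.mpr ⟨by linarith [h.1, hK], h.2⟩), hYb, ?_⟩
      have hexp : (fun ω => φ ω * Y ω) = fun ω => φ ω * X ω - d * φ ω := by
        funext ω; simp only [hYdef]; ring
      rw [hexp, integral_sub hφX (hφint.const_mul d), integral_const_mul, hφ1]
      have : d ≤ ∫ ω, φ ω * X ω ∂P - v := min_le_right _ _
      linarith
    refine NPcontra hlam hℓc hℓm hSol hYfeas (mul_pos hdpos hL0pos) ?_
    intro Q hQ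
    have hptwise : ∀ᵐ ω ∂P, ℓ (Y ω) ≤ ℓ (X ω) - d * deriv ℓ 0 := by
      filter_upwards [hXb, hforms] with ω h1 h2
      have hge : 0 ≤ X ω - d := by linarith [h2.1]
      have hmvt := (NPaux.mvt_bounds hℓC1 hmono' (by linarith : X ω - d ≤ X ω)).1
      have hd0 : deriv ℓ 0 ≤ deriv ℓ (X ω - d) := hmono' hge
      simp only [hYdef]
      nlinarith [hmvt, hd0, hdpos]
    have hintY : Integrable (fun ω => ℓ (Y ω)) Q := hQ.integrable_comp hℓc hℓm hYm hYb
    have hintX : Integrable (fun ω => ℓ (X ω)) Q := hQ.integrable_comp hℓc hℓm hXm hXb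
    have : IsProbabilityMeasure Q := hQ.1
    calc ∫ ω, ℓ (Y ω) ∂Q ≤ ∫ ω, (ℓ (X ω) - d * deriv ℓ 0) ∂Q :=
          integral_mono_ae hintY (hintX.sub (integrable_const _)) (hQ.ae hptwise)
      _ = ∫ ω, ℓ (X ω) ∂Q - d * deriv ℓ 0 := by
          rw [integral_sub hintX (integrable_const _), integral_const]
          simp
  -- β is small
  have hfloorMeas : MeasurableSet {ω | φ ω ≤ y} := measurableSet_le hφm measurable_const
  have hfloor_cap : min β K * m0 ≤ v := by
    have h1 : ∫ ω in {ω | φ ω ≤ y}, φ ω * X ω ∂P ≤ ∫ ω, φ ω * X ω ∂P :=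
      setIntegral_le_integral hφX hφXnn
    have h2 : ∫ ω in {ω | φ ω ≤ y}, φ ω * X ω ∂P
        = ∫ ω in {ω | φ ω ≤ y}, φ ω * min β K ∂P := by
      refine setIntegral_congr_ae hfloorMeas ?_
      filter_upwards [hforms] with ω h hmem
      rw [h.2.1 hmem]
    have h3 : ∫ ω in {ω | φ ω ≤ y}, φ ω * min β K ∂P
        = (∫ ω in {ω | φ ω ≤ y}, φ ω ∂P) * min β K := integral_mul_const _ _
    have h4 : m0 ≤ ∫ ω in {ω | φ ω ≤ y}, φ ω ∂P := by
      rw [hm0def]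
      refine setIntegral_mono_set hφint.integrableOn (ae_restrict_of_ae hφ0) ?_
      exact HasSubset.Subset.eventuallyLE (fun ω hω => le_trans hω hqy)
    have hminnn : 0 ≤ min β K := le_min hβ.le hK.le
    rw [hcapEq] at h1
    nlinarith [h1, h2, h3, h4]
  have hβK4 : β ≤ K / 4 := by
    have h1 : min β K ≤ K / 4 := by
      by_contra hc
      push_neg at hc
      have := hfloor_cap
      nlinarith [hvK, hm0pos]
    rcases min_cases β K with ⟨h2, _⟩ | ⟨h2, h3⟩
    · linarith [h1, h2.symm.le]
    · rw [h2] at h1; linarith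
  have hβK : β < K := by linarith
  have hminβ : min β K = β := min_eq_left hβK.le
  -- case split on y
  rcases le_or_gt y y2 with hycase | hycase
  · -- small y : the top region is fully charged, so v is large — contradiction
    have hustar : y * deriv ℓ K / deriv ℓ β ≤ U := by
      rw [hUdef]
      have h1 : deriv ℓ 0 ≤ deriv ℓ β := hmono' hβ0
      rw [div_le_div_iff₀ hβd hL0pos]
      have h2 : y * deriv ℓ 0 ≤ y2 * deriv ℓ β :=
        mul_le_mul hycase h1 hL0pos.le hy2pos.le
      nlinarith [h2, hLKpos]
    have hTopMeas : MeasurableSet {ω | U < φ ω} := measurableSet_lt measurable_const hφm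
    have h1 : ∫ ω in {ω | U < φ ω}, φ ω * X ω ∂P ≤ v := by
      rw [← hcapEq]
      exact setIntegral_le_integral hφX hφXnn
    have h2 : ∫ ω in {ω | U < φ ω}, φ ω * X ω ∂P
        = ∫ ω in {ω | U < φ ω}, φ ω * K ∂P := by
      refine setIntegral_congr_ae hTopMeas ?_
      filter_upwards [hforms] with ω h hmem
      rw [h.2.2 (le_trans hustar (le_of_lt hmem))]
    have h3 : ∫ ω in {ω | U < φ ω}, φ ω * K ∂P
        = (∫ ω in {ω | U < φ ω}, φ ω ∂P) * K := integral_mul_const _ _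
    have h4 : U * (P {ω | U < φ ω}).toReal ≤ ∫ ω in {ω | U < φ ω}, φ ω ∂P := by
      have h5 := setIntegral_mono_on
        (integrableOn_const (measure_lt_top P _).ne) hφint.integrableOn hTopMeas
        (fun ω hω => le_of_lt hω)
      rw [setIntegral_const, smul_eq_mul, measureReal_def] at h5
      linarith
    have hv2v : v2 ≤ v := by
      rw [hv2def]
      nlinarith [h1, h2, h3, h4, hK, ENNReal.toReal_nonneg (a := P {ω | U < φ ω})]
    linarith
  · -- large y : explicit improvement — contradiction
    set G : Set Ω := {ω | φ ω ≤ y / 2} with hGdef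
    set S : Set Ω := {ω | φ ω ≤ y} \ G with hSdef
    have hGmeas : MeasurableSet G := measurableSet_le hφm measurable_const
    have hSmeas : MeasurableSet S := hfloorMeas.diff hGmeas
    have hGsub : G ⊆ {ω | φ ω ≤ y} := by
      intro ω hω
      have h1 : φ ω ≤ y / 2 := hω
      show φ ω ≤ y
      linarith
    have hPS : 0 < (P S).toReal := by
      have hdiff : P S = P {ω | φ ω ≤ y} - P G :=
        measure_diff hGsub hGmeas.nullMeasurableSet (measure_ne_top P _)
      have hmono2 : (P G).toReal < (P {ω | φ ω ≤ y}).toReal :=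
        hFmono (by simpa using half_pos hy0) (by simpa using hy0) (half_lt_self hy0)
      rw [hdiff, ENNReal.toReal_sub_of_le (measure_mono hGsub) (measure_ne_top P _)]
      exact sub_pos.mpr hmono2
    set PS : ℝ := (P S).toReal with hPSdef
    set mG : ℝ := ∫ ω in G, φ ω ∂P with hmGdef
    have hmGnn : 0 ≤ mG := by
      rw [hmGdef]
      exact integral_nonneg_of_ae (ae_restrict_of_ae hφ0)
    have hmG1 : mG ≤ 1 := by
      rw [hmGdef, ← hφ1]
      exact setIntegral_le_integral hφint hφ0
    set δ : ℝ := min β (K * y * PS / (4 * (mG + 1))) with hδdef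
    have hδpos : 0 < δ := lt_min hβ (by positivity)
    have hδβ : δ ≤ β := min_le_left _ _
    set η : ℝ := 2 * δ * mG / (y * PS) with hηdef
    have hηnn : 0 ≤ η := by positivity
    have hηK2 : η ≤ K / 2 := by
      rw [hηdef]
      have hδ2 : δ ≤ K * y * PS / (4 * (mG + 1)) := min_le_right _ _
      rw [div_le_iff₀ (by positivity)]
      have h6 : δ * (4 * (mG + 1)) ≤ K * y * PS := by
        rw [← le_div_iff₀ (by positivity)]
        exact hδ2
      linarith [h6, hδpos.le, hmGnn]
    set Y : Ω → ℝ :=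
      fun ω => X ω + (S.indicator (fun _ => η) ω - G.indicator (fun _ => δ) ω) with hYdef
    have hYm : AEStronglyMeasurable Y P := by
      refine hXm.add ?_
      exact ((measurable_const.indicator hSmeas).sub
        (measurable_const.indicator hGmeas)).aestronglyMeasurable
    have hYvals : ∀ᵐ ω ∂P, (ω ∈ G → Y ω = β - δ) ∧ (ω ∈ S → Y ω = β + η) ∧
        (ω ∉ G → ω ∉ S → Y ω = X ω) := by
      filter_upwards [hforms] with ω h
      refine ⟨?_, ?_, ?_⟩
      · intro hG
        have hX1 : X ω = β := by rw [h.2.1 (hGsub hG), hminβ]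
        have hnS : ω ∉ S := fun hS => hS.2 hG
        simp only [hYdef, Set.indicator_of_mem hG, Set.indicator_of_notMem hnS, hX1]
        ring
      · intro hS
        have hX1 : X ω = β := by rw [h.2.1 hS.1, hminβ]
        simp only [hYdef, Set.indicator_of_mem hS, Set.indicator_of_notMem hS.2, hX1]
        ring
      · intro hG hS
        simp only [hYdef, Set.indicator_of_notMem hG, Set.indicator_of_notMem hS]
        ring
    have hYb : ∀ᵐ ω ∂P, 0 ≤ Y ω ∧ Y ω ≤ K := by
      filter_upwards [hYvals, hXb] with ω h hXb'
      by_cases hG : ω ∈ G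
      · rw [h.1 hG]
        constructor <;> linarith [hδβ, hβK4, hδpos.le]
      · by_cases hS : ω ∈ S
        · rw [h.2.1 hS]
          constructor <;> linarith [hβK4, hηK2, hηnn, hβ.le]
        · rw [h.2.2 hG hS]
          exact hXb'
    have hSφlb : y / 2 * PS ≤ ∫ ω in S, φ ω ∂P := by
      have h5 : (∫ _ω in S, (y / 2 : ℝ) ∂P) ≤ ∫ ω in S, φ ω ∂P :=
        setIntegral_mono_on (integrableOn_const (measure_lt_top P S).ne)
          hφint.integrableOn hSmeas
          (fun ω hω => le_of_lt (not_le.mp (hω.2 : ¬ φ ω ≤ y / 2)))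
      rw [setIntegral_const, smul_eq_mul, measureReal_def] at h5
      rw [hPSdef]
      linarith
    have hηint : δ * mG ≤ η * ∫ ω in S, φ ω ∂P := by
      have h7 : η * (y / 2 * PS) ≤ η * ∫ ω in S, φ ω ∂P :=
        mul_le_mul_of_nonneg_left hSφlb hηnn
      have h8 : η * (y / 2 * PS) = δ * mG := by
        rw [hηdef]
        field_simp
      linarith
    have hYfeas : Feasible P φ K v Y := by
      refine ⟨memLp_top_of_bound hYm K (hYb.mono fun ω hb => by
        rw [Real.norm_eq_abs]
        exact abs_le.mpr ⟨by linarith [hb.1, hK], hb.2⟩), hYb, ?_⟩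
      have hexp : (fun ω => φ ω * Y ω)
          = fun ω => φ ω * X ω + (η * S.indicator φ ω - δ * G.indicator φ ω) := by
        funext ω
        simp only [hYdef, Set.indicator_apply]
        split_ifs <;> ring
      have hintS : Integrable (fun ω => η * S.indicator φ ω) P :=
        ((hφint.indicator hSmeas).const_mul η)
      have hintG : Integrable (fun ω => δ * G.indicator φ ω) P :=
        ((hφint.indicator hGmeas).const_mul δ)
      have hintSG : Integrable (fun ω => η * S.indicator φ ω - δ * G.indicator φ ω) P :=
        hintS.sub hintG
      rw [hexp, integral_add hφX hintSG, integral_sub hintS hintG,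
        integral_const_mul, integral_const_mul, integral_indicator hSmeas,
        integral_indicator hGmeas, hcapEq, ← hmGdef]
      linarith [hηint]
    set gap : ℝ := δ * (deriv ℓ 0 - (2 * deriv ℓ 0 + 2 * deriv ℓ K) / (y * lam))
      with hgapdef
    have hylam : (2 * deriv ℓ K + 2 * deriv ℓ 0) < y * (deriv ℓ 0 * lam) := by
      have := (div_lt_iff₀ (by positivity : (0:ℝ) < deriv ℓ 0 * lam)).mp
        (by rw [← hy2def]; exact hycase)
      linarith
    have hgappos : 0 < gap := by
      rw [hgapdef]
      have h1 : (2 * deriv ℓ 0 + 2 * deriv ℓ K) / (y * lam) < deriv ℓ 0 := by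
        rw [div_lt_iff₀ (by positivity)]
        linarith [hylam]
      have := mul_pos hδpos (sub_pos.mpr h1)
      linarith
    refine NPcontra hlam hℓc hℓm hSol hYfeas hgappos ?_
    intro Q hQ
    have : IsProbabilityMeasure Q := hQ.1
    have hptwise : ∀ᵐ ω ∂P, ℓ (Y ω) ≤ ℓ (X ω) +
        (S.indicator (fun _ => η * deriv ℓ K) ω - G.indicator (fun _ => δ * deriv ℓ 0) ω) := by
      filter_upwards [hYvals, hforms, hXb] with ω h hf hxb
      by_cases hG : ω ∈ G
      · have hnS : ω ∉ S := fun hS => hS.2 hG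
        rw [h.1 hG, hf.2.1 (hGsub hG), hminβ, Set.indicator_of_mem hG,
          Set.indicator_of_notMem hnS]
        have hmvt := (NPaux.mvt_bounds hℓC1 hmono' (by linarith [hδpos.le] : β - δ ≤ β)).1
        have hd0 : deriv ℓ 0 ≤ deriv ℓ (β - δ) := hmono' (by linarith)
        have h12 : deriv ℓ 0 * δ ≤ deriv ℓ (β - δ) * (β - (β - δ)) := by
          rw [show β - (β - δ) = δ by ring]
          exact mul_le_mul_of_nonneg_right hd0 hδpos.le
        linarith [hmvt, h12]
      · by_cases hS : ω ∈ S
        · rw [h.2.1 hS, hf.2.1 hS.1, hminβ, Set.indicator_of_mem hS,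
            Set.indicator_of_notMem hG]
          have hmvt := (NPaux.mvt_bounds hℓC1 hmono' (by linarith [hηnn] : β ≤ β + η)).2
          have hdK : deriv ℓ (β + η) ≤ deriv ℓ K := hmono' (by linarith [hβK4, hηK2])
          have h12 : deriv ℓ (β + η) * (β + η - β) ≤ deriv ℓ K * η := by
            rw [show β + η - β = η by ring]
            exact mul_le_mul_of_nonneg_right hdK hηnn
          linarith [hmvt, h12]
        · rw [h.2.2 hG hS, Set.indicator_of_notMem hG, Set.indicator_of_notMem hS]
          linarith
    have hintY : Integrable (fun ω => ℓ (Y ω)) Q := hQ.integrable_comp hℓc hℓm hYm hYb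
    have hintX : Integrable (fun ω => ℓ (X ω)) Q := hQ.integrable_comp hℓc hℓm hXm hXb
    have hindS : Integrable (S.indicator (fun _ => η * deriv ℓ K)) Q :=
      (integrable_const _).indicator hSmeas
    have hindG : Integrable (G.indicator (fun _ => δ * deriv ℓ 0)) Q :=
      (integrable_const _).indicator hGmeas
    have hQle : ∫ ω, ℓ (Y ω) ∂Q ≤ ∫ ω, ℓ (X ω) ∂Q +
        (η * deriv ℓ K * (Q S).toReal - δ * deriv ℓ 0 * (Q G).toReal) := by
      calc ∫ ω, ℓ (Y ω) ∂Q ≤ ∫ ω, (ℓ (X ω) + (S.indicator (fun _ => η * deriv ℓ K) ω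
            - G.indicator (fun _ => δ * deriv ℓ 0) ω)) ∂Q :=
            integral_mono_ae hintY (hintX.add (hindS.sub hindG)) (hQ.ae hptwise)
        _ = _ := by
            have hindSG : Integrable (fun ω => S.indicator (fun _ => η * deriv ℓ K) ω
                - G.indicator (fun _ => δ * deriv ℓ 0) ω) Q := hindS.sub hindG
            rw [integral_add hintX hindSG, integral_sub hindS hindG,
              integral_indicator_const _ hSmeas, integral_indicator_const _ hGmeas]
            simp only [smul_eq_mul, measureReal_def]
            ring
    have hQS : (Q S).toReal ≤ PS / lam := hQ.meas_le hlam0 hSmeas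
    have hQG : 1 - (P Gᶜ).toReal / lam ≤ (Q G).toReal := hQ.meas_ge hlam0 hGmeas
    have hGc : (P Gᶜ).toReal ≤ 2 / y := by
      have hGceq : Gᶜ = {ω | y / 2 < φ ω} := by
        ext ω
        simp [hGdef, not_le]
      rw [hGceq]
      have h9 := NPmarkov hφm hφint hφ0 hφ1 (by positivity : (0:ℝ) < y / 2)
      have h10 : 1 / (y / 2) = 2 / y := by
        field_simp
      linarith [h9, h10.le, h10.ge]
    have hQGlb : 1 - 2 / (y * lam) ≤ (Q G).toReal := by
      have h11 : (P Gᶜ).toReal / lam ≤ (2 / y) / lam := (div_le_div_iff_of_pos_right hlam0).mpr hGc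
      rw [div_div] at h11
      linarith
    have hkey : η * deriv ℓ K * (Q S).toReal - δ * deriv ℓ 0 * (Q G).toReal ≤ -gap := by
      have h1 : η * deriv ℓ K * (Q S).toReal ≤ η * deriv ℓ K * (PS / lam) :=
        mul_le_mul_of_nonneg_left hQS (by positivity)
      have h2 : δ * deriv ℓ 0 * (1 - 2 / (y * lam)) ≤ δ * deriv ℓ 0 * (Q G).toReal :=
        mul_le_mul_of_nonneg_left hQGlb (by positivity)
      have h3 : η * deriv ℓ K * (PS / lam) = 2 * δ * mG * deriv ℓ K / (y * lam) := by
        rw [hηdef]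
        field_simp
      have h4 : 2 * δ * mG * deriv ℓ K / (y * lam) ≤ 2 * δ * deriv ℓ K / (y * lam) := by
        apply div_le_div_of_nonneg_right ?_ (by positivity)
        · have := mul_le_mul_of_nonneg_left hmG1
            (show (0:ℝ) ≤ 2 * δ * deriv ℓ K by positivity)
          linarith
      have h5 : 2 * δ * deriv ℓ K / (y * lam) + δ * deriv ℓ 0 * (2 / (y * lam))
          = δ * ((2 * deriv ℓ 0 + 2 * deriv ℓ K) / (y * lam)) := by
        field_simp
        ring
      have h2' : δ * deriv ℓ 0 * (1 - 2 / (y * lam))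
          = δ * deriv ℓ 0 - δ * deriv ℓ 0 * (2 / (y * lam)) := by ring
      rw [hgapdef]
      linarith [h1, h2, h3, h4, h5]
    linarith [hQle, hkey]
end

section
/- Let β = β(v) denote the constant (equal to the essential infimum of the unique solution X*(v)) in the representation X*(v) = β + (I(c(φ ∨ y)) − I(cy)) ∧ (K − β) of the unique solution of the Neyman–Pearson problem for ρ_λ at level v. Then β(v) < v for all v ∈ (0,K), and β(v) > 0 whenever v > K·E[φ·1_{φ≥q}]. -/
open MeasureTheory Filter Topology Set

private lemma ecoe_min (a b : ℝ) : min (a : EReal) (b : EReal) = ((min a b : ℝ) : EReal) := by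
  rcases le_total a b with h | h
  · rw [min_eq_left h, min_eq_left (by exact_mod_cast h : (a:EReal) ≤ b)]
  · rw [min_eq_right h, min_eq_right (by exact_mod_cast h : (b:EReal) ≤ a)]

private lemma extInv_cases {ℓ : ℝ → ℝ} (hℓconv : StrictConvexOn ℝ Set.univ ℓ)
    (hℓC1 : ContDiff ℝ 1 ℓ) {I : ℝ → EReal} (hI : IsExtendedInverse ℓ I)
    {β z : ℝ} (h : deriv ℓ β ≤ z) :
    I z = ⊤ ∨ ∃ r : ℝ, I z = (r : EReal) ∧ β ≤ r ∧ (deriv ℓ β < z → β < r) := by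
  have hdiff : ∀ x : ℝ, DifferentiableAt ℝ ℓ x := fun x => (hℓC1.differentiable one_ne_zero) x
  have hdm : StrictMono (deriv ℓ) := fun a b hab =>
    hℓconv.strictMonoOn_deriv (fun x _ => hdiff x) (Set.mem_univ a) (Set.mem_univ b) hab
  by_cases hatt : ∃ x : ℝ, deriv ℓ x = z
  · obtain ⟨x, hx⟩ := hatt
    refine Or.inr ⟨x, by rw [← hx]; exact hI.1 x, ?_, ?_⟩
    · by_contra hbx
      push_neg at hbx
      exact absurd h (not_le.2 (hx ▸ hdm hbx))
    · intro hlt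
      by_contra hbx
      push_neg at hbx
      exact absurd hlt (not_lt.2 (hx ▸ hdm.monotone hbx))
  · push_neg at hatt
    refine Or.inl (hI.2.1 z fun x => ?_)
    by_contra hzx
    push_neg at hzx
    have hβx : β ≤ x := by
      by_contra hxb
      push_neg at hxb
      exact absurd (h.trans hzx) (not_le.2 (hdm hxb))
    have hcont : ContinuousOn (deriv ℓ) (Set.Icc β x) :=
      (hℓC1.continuous_deriv le_rfl).continuousOn
    obtain ⟨t, _, ht⟩ := intermediate_value_Icc hβx hcont ⟨h, hzx⟩
    exact hatt t ht

/-- Lemma 3.4: the constant `β = β(v)` in the representation of the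
unique solution of the Neyman–Pearson problem for `ρ_λ` at level `v` satisfies `β(v) < v`
for all `v ∈ (0,K)`, and `β(v) > 0` whenever `v > K·E[φ; φ ≥ q]`. -/
theorem rhoLam_beta_bounds
    {Ω : Type*} [MeasurableSpace Ω] (P : Measure Ω) [IsProbabilityMeasure P]
    (hP : Atomless P)
    (φ : Ω → ℝ) (hφm : Measurable φ) (hφint : Integrable φ P)
    (hφpos : ∀ᵐ ω ∂P, 0 < φ ω) (hφ1 : ∫ ω, φ ω ∂P = 1)
    (hφunb : ∀ M : ℝ, 0 < P {ω | M < φ ω})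
    (hFcont : ContinuousOn (fun x : ℝ => (P {ω | φ ω ≤ x}).toReal) (Ioi 0))
    (hFmono : StrictMonoOn (fun x : ℝ => (P {ω | φ ω ≤ x}).toReal) (Ioi 0))
    (K : ℝ) (hK : 0 < K) (lam : ℝ) (hlam : lam ∈ Ioo (0:ℝ) 1)
    (ℓ : ℝ → ℝ) (hℓconv : StrictConvexOn ℝ univ ℓ) (hℓmono : StrictMono ℓ)
    (hℓC1 : ContDiff ℝ 1 ℓ) (hℓ'pos : ∀ x : ℝ, 0 < deriv ℓ x)
    (I : ℝ → EReal) (hI : IsExtendedInverse ℓ I)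
    (q : ℝ) (hq : (P {ω | φ ω < q}).toReal ≤ 1 - lam ∧
      1 - lam ≤ (P {ω | φ ω ≤ q}).toReal) :
    ∀ v ∈ Ioo (0:ℝ) K, ∀ X : Ω → ℝ, ∀ β y c : ℝ,
      IsLamSolution P lam ℓ φ K v X → LamForm P φ ℓ I K q X β y c →
        β < v ∧ (K * ∫ ω in {ω | q ≤ φ ω}, φ ω ∂P < v → 0 < β) := by
  intro v hv X β y c hsol hform
  obtain ⟨hβ0, hqy, hc, hXeq⟩ := hform
  obtain ⟨⟨hXmem, hXbd, hXint⟩, hmin⟩ := hsol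
  -- q > 0
  have hq0 : 0 < q := by
    by_contra h
    push_neg at h
    have hnull : P {ω | φ ω ≤ q} = 0 := by
      refine measure_mono_null (fun ω hω => ?_) (ae_iff.1 hφpos)
      simp only [Set.mem_setOf_eq, not_lt] at *
      exact le_trans hω h
    rw [hnull] at hq
    simp at hq
    linarith [hlam.2, hq.2]
  have hy0 : 0 < y := hq0.trans_le hqy
  have hcy : c * y = deriv ℓ β := by
    rw [hc]; field_simp
  have hcpos : 0 < c := by
    rw [hc]; exact div_pos (hℓ'pos β) hy0
  have hIcy : I (c * y) = (β : EReal) := by rw [hcy]; exact hI.1 β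
  -- pointwise description of X
  have hpt : ∀ᵐ ω ∂P,
      (X ω = K ∨ ∃ r : ℝ, β ≤ r ∧ X ω = β + min (r - β) (K - β)) ∧
      (y < φ ω → (X ω = K ∨ ∃ r : ℝ, β < r ∧ X ω = β + min (r - β) (K - β))) := by
    filter_upwards [hXeq] with ω hω
    have hz1 : deriv ℓ β ≤ c * max (φ ω) y := by
      rw [← hcy]
      exact mul_le_mul_of_nonneg_left (le_max_right _ _) hcpos.le
    rcases extInv_cases hℓconv hℓC1 hI hz1 with htop | ⟨r, hr, hβr, hβrs⟩
    · have hXK : X ω = K := by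
        rw [hω, htop, hIcy, EReal.top_sub_coe, min_eq_right le_top, EReal.toReal_coe]
        ring
      exact ⟨Or.inl hXK, fun _ => Or.inl hXK⟩
    · have hXr : X ω = β + min (r - β) (K - β) := by
        rw [hω, hIcy, hr, ← EReal.coe_sub, ecoe_min, EReal.toReal_coe]
      constructor
      · exact Or.inr ⟨r, hβr, hXr⟩
      · intro hyφ
        refine Or.inr ⟨r, ?_, hXr⟩
        apply hβrs
        rw [← hcy, max_eq_left hyφ.le]
        exact mul_lt_mul_of_pos_left hyφ hcpos
  -- bound for ℓ ∘ X and integrals w.r.t. any admissible Q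
  set C : ℝ := max |ℓ 0| |ℓ K| with hC
  have hbP : ∀ᵐ ω ∂P, ℓ 0 ≤ ℓ (X ω) ∧ ℓ (X ω) ≤ ℓ K := by
    filter_upwards [hXbd] with ω hω
    exact ⟨hℓmono.monotone hω.1, hℓmono.monotone hω.2⟩
  have hmeasP : AEStronglyMeasurable (fun ω => ℓ (X ω)) P :=
    (hℓC1.continuous.comp_aestronglyMeasurable hXmem.1)
  have hQint : ∀ Q : Measure Ω, IsProbabilityMeasure Q → Q ≪ P →
      Integrable (fun ω => ℓ (X ω)) Q ∧ ∫ ω, ℓ (X ω) ∂Q ≤ ℓ K := by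
    intro Q hQprob hQac
    have hbQ : ∀ᵐ ω ∂Q, ℓ 0 ≤ ℓ (X ω) ∧ ℓ (X ω) ≤ ℓ K := hQac.ae_le hbP
    have hmQ : AEStronglyMeasurable (fun ω => ℓ (X ω)) Q := hmeasP.mono_ac hQac
    have hint : Integrable (fun ω => ℓ (X ω)) Q := by
      refine Integrable.mono' (integrable_const C) hmQ ?_
      filter_upwards [hbQ] with ω hω
      rw [Real.norm_eq_abs, abs_le]
      constructor
      · calc -C ≤ -|ℓ 0| := by simp [hC]
          _ ≤ ℓ 0 := neg_abs_le _
          _ ≤ ℓ (X ω) := hω.1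
      · calc ℓ (X ω) ≤ ℓ K := hω.2
          _ ≤ |ℓ K| := le_abs_self _
          _ ≤ C := le_max_right _ _
    refine ⟨hint, ?_⟩
    calc ∫ ω, ℓ (X ω) ∂Q ≤ ∫ _, ℓ K ∂Q := by
          refine integral_mono_ae hint (integrable_const _) ?_
          filter_upwards [hbQ] with ω hω using hω.2
      _ = ℓ K := by simp
  have hPmemQ : ∀ᵐ ω ∂P, P.rnDeriv P ω ≤ ENNReal.ofReal (1 / lam) := by
    filter_upwards [Measure.rnDeriv_self P] with ω hω
    rw [hω]
    rw [ENNReal.one_le_ofReal]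
    rw [le_div_iff₀ hlam.1]
    linarith [hlam.2]
  constructor
  · -- β < v
    by_contra hβv
    push_neg at hβv
    have hge : ∀ᵐ ω ∂P, v ≤ X ω ∧ (y < φ ω → v < X ω) := by
      filter_upwards [hpt] with ω hω
      constructor
      · rcases hω.1 with hXK | ⟨r, hβr, hXr⟩
        · rw [hXK]; exact hv.2.le
        · rcases le_total (r - β) (K - β) with hm | hm
          · rw [hXr, min_eq_left hm]
            have : β + (r - β) = r := by ring
            rw [this]
            linarith
          · rw [hXr, min_eq_right hm]
            have : β + (K - β) = K := by ring
            rw [this]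
            exact hv.2.le
      · intro hyφ
        rcases hω.2 hyφ with hXK | ⟨r, hβr, hXr⟩
        · rw [hXK]; exact hv.2
        · rcases le_total (r - β) (K - β) with hm | hm
          · rw [hXr, min_eq_left hm]
            have : β + (r - β) = r := by ring
            rw [this]
            linarith
          · rw [hXr, min_eq_right hm]
            have : β + (K - β) = K := by ring
            rw [this]
            exact hv.2
    obtain ⟨hIX, hIXle⟩ := hQint P inferInstance (Measure.AbsolutelyContinuous.refl P)
    -- strict integral inequality
    have hgnn : 0 ≤ᵐ[P] fun ω => ℓ (X ω) - ℓ v := by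
      filter_upwards [hge] with ω hω
      simp [sub_nonneg]
      exact hℓmono.monotone hω.1
    have hgint : Integrable (fun ω => ℓ (X ω) - ℓ v) P := hIX.sub (integrable_const _)
    have hgpos : 0 < ∫ ω, (ℓ (X ω) - ℓ v) ∂P := by
      rcases (integral_nonneg_of_ae hgnn).eq_or_lt with heq | hlt
      · exfalso
        have hzero : (fun ω => ℓ (X ω) - ℓ v) =ᵐ[P] 0 :=
          (integral_eq_zero_iff_of_nonneg_ae hgnn hgint).1 heq.symm
        have hnull : ∀ᵐ ω ∂P, ¬ y < φ ω := by
          filter_upwards [hzero, hge] with ω h0 hω hyφ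
          have hXv : ℓ (X ω) = ℓ v := by
            have := h0
            simp at this
            linarith [this]
          have : X ω = v := hℓmono.injective hXv
          linarith [hω.2 hyφ]
        have : P {ω | y < φ ω} = 0 := by
          have := ae_iff.1 hnull
          simpa using this
        exact absurd this (hφunb y).ne'
      · exact hlt
    have hIXgt : ℓ v < ∫ ω, ℓ (X ω) ∂P := by
      have : ∫ ω, (ℓ (X ω) - ℓ v) ∂P = ∫ ω, ℓ (X ω) ∂P - ℓ v := by
        rw [integral_sub hIX (integrable_const _)]
        simp
      linarith [this ▸ hgpos]
    -- feasibility of the constant v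
    have hYfeas : Feasible P φ K v (fun _ => v) := by
      refine ⟨memLp_const v, Eventually.of_forall fun ω => ⟨hv.1.le, hv.2.le⟩, ?_⟩
      rw [integral_mul_const, hφ1, one_mul]
    have hle := hmin _ hYfeas
    -- rhoLam of the constant is ℓ v
    have hYval : rhoLam P lam ℓ (fun _ => v) = ℓ v := by
      have hset : {r : ℝ | ∃ Q : Measure Ω, IsProbabilityMeasure Q ∧ Q ≪ P ∧
          (∀ᵐ ω ∂P, Q.rnDeriv P ω ≤ ENNReal.ofReal (1 / lam)) ∧
          r = ∫ _ω, ℓ v ∂Q} = {ℓ v} := by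
        apply Set.eq_singleton_iff_unique_mem.2
        constructor
        · exact ⟨P, inferInstance, Measure.AbsolutelyContinuous.refl P, hPmemQ, by simp⟩
        · rintro r ⟨Q, hQprob, _, _, hr⟩
          rw [hr]
          simp
      rw [rhoLam, hset, csSup_singleton]
    -- rhoLam of X is at least ∫ ℓ(X) dP
    have hXval : ∫ ω, ℓ (X ω) ∂P ≤ rhoLam P lam ℓ X := by
      apply le_csSup
      · refine ⟨ℓ K, ?_⟩
        rintro r ⟨Q, hQprob, hQac, _, hr⟩
        rw [hr]
        exact (hQint Q hQprob hQac).2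
      · exact ⟨P, inferInstance, Measure.AbsolutelyContinuous.refl P, hPmemQ, rfl⟩
    rw [hYval] at hle
    linarith
  · -- second part
    intro hKv
    by_contra hβ
    push_neg at hβ
    have hβ0' : β = 0 := le_antisymm hβ hβ0
    subst hβ0'
    have hzero : ∀ᵐ ω ∂P, φ ω ≤ y → X ω = 0 := by
      filter_upwards [hXeq] with ω hω hφy
      rw [hω, max_eq_right hφy, hIcy]
      have h1 : (0 : EReal) - (0 : EReal) = ((0 : ℝ) : EReal) := by
        norm_num
      have h2 : min ((0:ℝ) : EReal) (((K - 0 : ℝ)) : EReal) = ((0:ℝ) : EReal) := by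
        rw [ecoe_min, min_eq_left (by linarith : (0:ℝ) ≤ K - 0)]
      simp only [EReal.coe_zero] at h1 h2 ⊢
      rw [h1, h2]
      simp
    have hcmp : ∀ᵐ ω ∂P,
        φ ω * X ω ≤ Set.indicator {ω | q ≤ φ ω} (fun ω => K * φ ω) ω := by
      filter_upwards [hzero, hXbd, hφpos] with ω h0 hb hp
      rcases le_or_gt (φ ω) y with hle | hlt
      · rw [h0 hle, mul_zero]
        by_cases hmem : ω ∈ {ω | q ≤ φ ω}
        · rw [Set.indicator_of_mem hmem]
          positivity
        · rw [Set.indicator_of_notMem hmem]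
      · have hmem : ω ∈ {ω | q ≤ φ ω} := le_of_lt (lt_of_le_of_lt hqy hlt)
        rw [Set.indicator_of_mem hmem]
        calc φ ω * X ω ≤ φ ω * K := mul_le_mul_of_nonneg_left hb.2 hp.le
          _ = K * φ ω := mul_comm _ _
    have hintφX : Integrable (fun ω => φ ω * X ω) P := by
      refine Integrable.mono' (hφint.abs.const_mul K) (hφm.aestronglyMeasurable.mul hXmem.1) ?_
      filter_upwards [hXbd] with ω hω
      rw [Real.norm_eq_abs, abs_mul]
      calc |φ ω| * |X ω| ≤ |φ ω| * K := by
            refine mul_le_mul_of_nonneg_left ?_ (abs_nonneg _)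
            rw [abs_le]
            exact ⟨by linarith [hω.1, hK], hω.2⟩
        _ = K * |φ ω| := mul_comm _ _
    have hsetm : MeasurableSet {ω | q ≤ φ ω} := measurableSet_le measurable_const hφm
    have hindint : Integrable (Set.indicator {ω | q ≤ φ ω} (fun ω => K * φ ω)) P :=
      (hφint.const_mul K).indicator hsetm
    have hmono := integral_mono_ae hintφX hindint hcmp
    rw [integral_indicator hsetm, integral_const_mul] at hmono
    linarith
end

section
/- The set of extreme points of the convex set C equals C ∩ 𝒥: a function f ∈ C is an extreme point of C if and only if f belongs to the class 𝒥. -/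
open MeasureTheory Filter Topology Set

/-- The distribution function `F_φ` of `φ`. -/
noncomputable def cdf {Ω : Type*} [MeasurableSpace Ω] (P : Measure Ω) (φ : Ω → ℝ)
    (x : ℝ) : ℝ :=
  (P {ω | φ ω ≤ x}).toReal

/-- The measure `μ` on `[0,∞)` defined by `μ(A) = E[φ; φ ∈ A]`. -/
noncomputable def muD {Ω : Type*} [MeasurableSpace Ω] (P : Measure Ω) (φ : Ω → ℝ) :
    Measure ℝ :=
  Measure.map φ (P.withDensity fun ω => ENNReal.ofReal (φ ω))

/-- The convex set `C` of all increasing functions `f : [0,∞) → [0,1]` that are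
right-continuous at every continuity point of `F_φ` and satisfy `∫ f dμ = v`.
(Functions on `[0,∞)` are modelled as functions on `ℝ` pinned by `f(x) = f(0)` for
`x < 0`.) -/
def CSet {Ω : Type*} [MeasurableSpace Ω] (P : Measure Ω) (φ : Ω → ℝ) (v : ℝ) :
    Set (ℝ → ℝ) :=
  {f | MonotoneOn f (Ici 0) ∧ (∀ x ∈ Ici (0:ℝ), f x ∈ Icc (0:ℝ) 1) ∧
    (∀ x < (0:ℝ), f x = f 0) ∧
    (∀ x ∈ Ici (0:ℝ), ContinuousAt (cdf P φ) x → ContinuousWithinAt f (Ici x) x) ∧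
    ∫ x, f x ∂(muD P φ) = v}

/-- The class `𝒥` of increasing step functions `f : [0,∞) → [0,1]` taking at most one
value in `(0,1)`: `f = β·1_{J₀} + 1_{J₁}` with `β ∈ (0,1)` and disjoint intervals
`J₀, J₁`, where `J₀` is empty or satisfies `μ(J₀) > 0`, `J₁` is empty or unbounded to the
right, and if both are nonempty, the right endpoint of `J₀` is the left endpoint of
`J₁`. -/
def JSet {Ω : Type*} [MeasurableSpace Ω] (P : Measure Ω) (φ : Ω → ℝ) : Set (ℝ → ℝ) :=
  {f | MonotoneOn f (Ici 0) ∧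
    ∃ (β : ℝ) (J0 J1 : Set ℝ), β ∈ Ioo (0:ℝ) 1 ∧
      J0 ⊆ Ici 0 ∧ J1 ⊆ Ici 0 ∧ J0.OrdConnected ∧ J1.OrdConnected ∧ Disjoint J0 J1 ∧
      (J0 = ∅ ∨ 0 < muD P φ J0) ∧
      (J1 = ∅ ∨ ¬ BddAbove J1) ∧
      (J0.Nonempty → J1.Nonempty → sSup J0 = sInf J1) ∧
      ∀ x ∈ Ici (0:ℝ),
        f x = β * J0.indicator (fun _ => (1:ℝ)) x + J1.indicator (fun _ => (1:ℝ)) x}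

section Helpers
variable {Ω : Type*} [MeasurableSpace Ω]

lemma muD_univ_lt_top (P : Measure Ω)
    (φ : Ω → ℝ) (hφm : Measurable φ) (hφint : Integrable φ P) :
    Measure.map φ (P.withDensity fun ω => ENNReal.ofReal (φ ω)) univ < ⊤ := by
  rw [Measure.map_apply hφm MeasurableSet.univ]
  simp only [preimage_univ]
  rw [withDensity_apply _ MeasurableSet.univ, Measure.restrict_univ]
  calc ∫⁻ ω, ENNReal.ofReal (φ ω) ∂P ≤ ∫⁻ ω, ‖φ ω‖ₑ ∂P :=
        lintegral_mono fun ω => Real.ofReal_le_enorm _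
    _ < ⊤ := hφint.2

lemma muD_Iio_zero (P : Measure Ω)
    (φ : Ω → ℝ) (hφm : Measurable φ) (hφpos : ∀ᵐ ω ∂P, 0 < φ ω) :
    Measure.map φ (P.withDensity fun ω => ENNReal.ofReal (φ ω)) (Iio 0) = 0 := by
  rw [Measure.map_apply hφm measurableSet_Iio]
  apply (withDensity_absolutelyContinuous P _)
  have h0 : P {ω | ¬ 0 < φ ω} = 0 := by rw [← MeasureTheory.ae_iff]; exact hφpos
  apply measure_mono_null _ h0
  intro ω hω
  simp only [mem_preimage, mem_Iio] at hω
  simp only [mem_setOf_eq, not_lt]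
  exact hω.le

end Helpers

lemma mono_glob {f : ℝ → ℝ} (h1 : MonotoneOn f (Ici 0))
    (h3 : ∀ x < (0:ℝ), f x = f 0) : Monotone f := by
  intro x y hxy
  rcases lt_or_ge x 0 with hx | hx
  · rcases lt_or_ge y 0 with hy | hy
    · rw [h3 x hx, h3 y hy]
    · rw [h3 x hx]; exact h1 self_mem_Ici hy hy
  · exact h1 hx (le_trans hx hxy) hxy

lemma range_glob {f : ℝ → ℝ} (h2 : ∀ x ∈ Ici (0:ℝ), f x ∈ Icc (0:ℝ) 1)
    (h3 : ∀ x < (0:ℝ), f x = f 0) : ∀ x, f x ∈ Icc (0:ℝ) 1 := by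
  intro x
  rcases lt_or_ge x 0 with hx | hx
  · rw [h3 x hx]; exact h2 0 self_mem_Ici
  · exact h2 x hx

lemma integrable_of_bdd {μ : Measure ℝ} (hfin : μ univ < ⊤) {f : ℝ → ℝ}
    (hm : Measurable f) (hb : ∀ x, |f x| ≤ 1) : Integrable f μ := by
  haveI : IsFiniteMeasure μ := ⟨hfin⟩
  exact (integrable_const (1:ℝ)).mono' hm.aestronglyMeasurable
    (ae_of_all _ (by simpa [Real.norm_eq_abs] using hb))

lemma min_mono_aux (c : ℝ) : Monotone fun u : ℝ => min u c :=
  fun _ _ h => min_le_min h (le_refl c)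

lemma mid_mono_aux {c₁ c₂ : ℝ} (h : c₁ ≤ c₂) :
    Monotone fun u : ℝ => min u c₂ - min u c₁ := by
  intro u u' huu
  simp only [min_def]
  split_ifs <;> linarith

lemma top_mono_aux (c : ℝ) : Monotone fun u : ℝ => u - min u c := by
  intro u u' huu
  simp only [min_def]
  split_ifs <;> linarith

lemma exists_orth (x1 y1 z1 x2 y2 z2 : ℝ) (hx1 : x1 ≠ 0) :
    ∃ a b d : ℝ, ¬(a = 0 ∧ b = 0 ∧ d = 0) ∧
      a * x1 + b * y1 + d * z1 = 0 ∧ a * x2 + b * y2 + d * z2 = 0 := by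
  by_cases h : x1 * y2 - y1 * x2 = 0
  · refine ⟨-y1, x1, 0, ?_, by ring, by linarith [h]⟩
    rintro ⟨-, hb, -⟩; exact hx1 hb
  · refine ⟨y1 * z2 - z1 * y2, z1 * x2 - x1 * z2, x1 * y2 - y1 * x2, ?_, by ring, by ring⟩
    rintro ⟨-, -, hd⟩; exact h hd

/-- Membership in `CSet` of a three-slope reparametrization of `f`. -/
lemma memC_perturb {Ω : Type*} [MeasurableSpace Ω] (P : Measure Ω) (φ : Ω → ℝ)
    (hφm : Measurable φ) (hφint : Integrable φ P) (v : ℝ)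
    {f : ℝ → ℝ} (hf : f ∈ CSet P φ v) {c₁ c₂ : ℝ}
    (hc₁ : 0 < c₁) (hc₁₂ : c₁ ≤ c₂) (hc₂ : c₂ ≤ 1)
    {α γ δ : ℝ} (hα : 0 < α) (hγ : 0 < γ) (hδ : 0 < δ)
    (hco : α * c₁ + γ * (c₂ - c₁) + δ * (1 - c₂) = 1)
    (hint : α * (∫ x, min (f x) c₁ ∂(muD P φ))
        + γ * (∫ x, (min (f x) c₂ - min (f x) c₁) ∂(muD P φ))
        + δ * (∫ x, (f x - min (f x) c₂) ∂(muD P φ)) = v) :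
    (fun x => α * min (f x) c₁ + γ * (min (f x) c₂ - min (f x) c₁)
      + δ * (f x - min (f x) c₂)) ∈ CSet P φ v := by
  obtain ⟨h1, h2, h3, h4, h5⟩ := hf
  have hfm : Monotone f := mono_glob h1 h3
  have hfr : ∀ x, f x ∈ Icc (0:ℝ) 1 := range_glob h2 h3
  refine ⟨?_, ?_, ?_, ?_, ?_⟩
  · -- monotone
    intro x hx y hy hxy
    have m1 := (min_mono_aux c₁) (hfm hxy)
    have m2 := (mid_mono_aux hc₁₂) (hfm hxy)
    have m3 := (top_mono_aux c₂) (hfm hxy)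
    simp only at m1 m2 m3
    have := mul_le_mul_of_nonneg_left m1 hα.le
    have := mul_le_mul_of_nonneg_left m2 hγ.le
    have := mul_le_mul_of_nonneg_left m3 hδ.le
    dsimp only
    linarith
  · -- range
    intro x hx
    have hu := hfr x
    constructor
    · have e1 : 0 ≤ min (f x) c₁ := le_min hu.1 hc₁.le
      have e2 : min (f x) c₁ ≤ min (f x) c₂ := min_le_min (le_refl _) hc₁₂
      have e3 : min (f x) c₂ ≤ f x := min_le_left _ _
      have := mul_nonneg hα.le e1
      have := mul_nonneg hγ.le (by linarith : (0:ℝ) ≤ min (f x) c₂ - min (f x) c₁)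
      have := mul_nonneg hδ.le (by linarith : (0:ℝ) ≤ f x - min (f x) c₂)
      dsimp only
      linarith
    · -- compare with value at u = 1
      have m1 := (min_mono_aux c₁) hu.2
      have m2 := (mid_mono_aux hc₁₂) hu.2
      have m3 := (top_mono_aux c₂) hu.2
      simp only [min_eq_right (show c₁ ≤ (1:ℝ) by linarith),
        min_eq_right hc₂] at m1 m2 m3
      have := mul_le_mul_of_nonneg_left m1 hα.le
      have := mul_le_mul_of_nonneg_left m2 hγ.le
      have := mul_le_mul_of_nonneg_left m3 hδ.le
      dsimp only
      linarith
  · -- pin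
    intro x hx
    simp only [h3 x hx]
  · -- right continuity
    intro x hx hF
    have hg : Continuous fun u : ℝ => α * min u c₁ + γ * (min u c₂ - min u c₁)
        + δ * (u - min u c₂) := by fun_prop
    exact hg.continuousAt.comp_continuousWithinAt (h4 x hx hF)
  · -- integral
    have hμfin := muD_univ_lt_top P φ hφm hφint
    have hfmeas : Measurable f := hfm.measurable
    have i1 : Integrable (fun x => min (f x) c₁) (muD P φ) := by
      apply integrable_of_bdd hμfin (hfmeas.min measurable_const)
      intro x
      have := hfr x
      rw [abs_le]
      constructor
      · have : (0:ℝ) ≤ min (f x) c₁ := le_min (hfr x).1 hc₁.le; linarith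
      · have : min (f x) c₁ ≤ f x := min_le_left _ _; linarith [(hfr x).2]
    have i2 : Integrable (fun x => min (f x) c₂ - min (f x) c₁) (muD P φ) := by
      apply integrable_of_bdd hμfin ((hfmeas.min measurable_const).sub
        (hfmeas.min measurable_const))
      intro x
      have e2 : min (f x) c₁ ≤ min (f x) c₂ := min_le_min (le_refl _) hc₁₂
      have e0 : (0:ℝ) ≤ min (f x) c₁ := le_min (hfr x).1 hc₁.le
      have e3 : min (f x) c₂ ≤ f x := min_le_left _ _
      simp only [Pi.sub_apply, abs_le]; constructor <;> linarith [(hfr x).2]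
    have i3 : Integrable (fun x => f x - min (f x) c₂) (muD P φ) := by
      apply integrable_of_bdd hμfin (hfmeas.sub (hfmeas.min measurable_const))
      intro x
      have e3 : min (f x) c₂ ≤ f x := min_le_left _ _
      have e0 : (0:ℝ) ≤ min (f x) c₂ := le_min (hfr x).1 (hc₁.le.trans hc₁₂)
      simp only [Pi.sub_apply, abs_le]; constructor <;> linarith [(hfr x).2]
    have i23 : Integrable (fun x => γ * (min (f x) c₂ - min (f x) c₁)
        + δ * (f x - min (f x) c₂)) (muD P φ) := (i2.const_mul γ).add (i3.const_mul δ)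
    have e0 : (fun x => α * min (f x) c₁ + γ * (min (f x) c₂ - min (f x) c₁)
        + δ * (f x - min (f x) c₂))
      = (fun x => α * min (f x) c₁ + (γ * (min (f x) c₂ - min (f x) c₁)
        + δ * (f x - min (f x) c₂))) := funext fun x => by ring
    rw [e0]
    have e1 : ∫ x, (α * min (f x) c₁ + (γ * (min (f x) c₂ - min (f x) c₁)
        + δ * (f x - min (f x) c₂))) ∂(muD P φ)
        = ∫ x, α * min (f x) c₁ ∂(muD P φ)
          + ∫ x, (γ * (min (f x) c₂ - min (f x) c₁)
            + δ * (f x - min (f x) c₂)) ∂(muD P φ) :=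
      integral_add (i1.const_mul α) i23
    have e2 : ∫ x, (γ * (min (f x) c₂ - min (f x) c₁)
        + δ * (f x - min (f x) c₂)) ∂(muD P φ)
        = ∫ x, γ * (min (f x) c₂ - min (f x) c₁) ∂(muD P φ)
          + ∫ x, δ * (f x - min (f x) c₂) ∂(muD P φ) :=
      integral_add (i2.const_mul γ) (i3.const_mul δ)
    rw [e1, e2, integral_const_mul, integral_const_mul, integral_const_mul]
    linarith

/-- Membership in `CSet` for a shift of the middle value of a three-valued `f`,
when the middle level set is `μ`-null. -/
lemma memC_shift {Ω : Type*} [MeasurableSpace Ω] (P : Measure Ω) (φ : Ω → ℝ)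
    (v : ℝ) {f : ℝ → ℝ} (hf : f ∈ CSet P φ v) {β σ : ℝ} (hβ : β ∈ Ioo (0:ℝ) 1)
    (hσ1 : -β ≤ σ) (hσ2 : σ ≤ 1 - β)
    (hval : ∀ x, f x = 0 ∨ f x = β ∨ f x = 1)
    (hnull : muD P φ {x | f x = β} = 0) :
    (fun x => if f x = β then β + σ else f x) ∈ CSet P φ v := by
  obtain ⟨h1, h2, h3, h4, h5⟩ := hf
  have hβ0 : (0:ℝ) ≠ β := hβ.1.ne
  have hβ1 : (1:ℝ) ≠ β := hβ.2.ne'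
  refine ⟨?_, ?_, ?_, ?_, ?_⟩
  · -- monotone
    intro x hx y hy hxy
    have hf' : f x ≤ f y := h1 hx hy hxy
    dsimp only
    rcases hval x with h | h | h <;> rcases hval y with h' | h' | h' <;>
      rw [h, h'] at hf' ⊢ <;>
      split_ifs <;> first | rfl | linarith [hβ.1, hβ.2]
  · -- range
    intro x hx
    dsimp only
    by_cases h : f x = β
    · rw [if_pos h]
      constructor <;> linarith [hβ.1, hβ.2]
    · rw [if_neg h]
      exact h2 x hx
  · -- pin
    intro x hx
    simp only [h3 x hx]
  · -- right continuity
    intro x hx hF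
    have hrc := h4 x hx hF
    have hδ : (0:ℝ) < min β (1 - β) := lt_min hβ.1 (by linarith [hβ.2])
    have hev : ∀ᶠ y in 𝓝[Ici x] x, f y ∈ Metric.ball (f x) (min β (1 - β)) :=
      hrc (Metric.ball_mem_nhds (f x) hδ)
    have hev' : ∀ᶠ y in 𝓝[Ici x] x, f y = f x := by
      filter_upwards [hev] with y hy
      rw [Metric.mem_ball, Real.dist_eq, abs_sub_lt_iff] at hy
      rcases hval x with h | h | h <;> rcases hval y with h' | h' | h' <;>
        rw [h, h'] at hy ⊢ <;>
        first
          | rfl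
          | (exfalso;
             rcases hy with ⟨hy1, hy2⟩;
             rcases le_total β (1 - β) with hb | hb <;>
               simp [min_def, hb] at hy1 hy2 <;> linarith [hβ.1, hβ.2])
    have : ∀ᶠ y in 𝓝[Ici x] x,
        (fun z => if f z = β then β + σ else f z) y
          = (fun z => if f z = β then β + σ else f z) x := by
      filter_upwards [hev'] with y hy
      simp only [hy]
    exact Filter.Tendsto.congr' (by filter_upwards [this] with y hy; exact hy.symm)
      tendsto_const_nhds
  · -- integral
    have hae : (fun x => if f x = β then β + σ else f x) =ᵐ[muD P φ] f := by
      have : {x : ℝ | ¬ (fun x => if f x = β then β + σ else f x) x = f x}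
          ⊆ {x | f x = β} := by
        intro x hx
        simp only [mem_setOf_eq] at hx ⊢
        by_contra h
        exact hx (if_neg h)
      exact measure_mono_null this hnull
    rw [integral_congr_ae hae]
    exact h5

lemma jset_extreme {Ω : Type*} [MeasurableSpace Ω] (P : Measure Ω) (φ : Ω → ℝ)
    (hφm : Measurable φ) (hφint : Integrable φ P) (hφpos : ∀ᵐ ω ∂P, 0 < φ ω) (v : ℝ)
    {f : ℝ → ℝ} (hfC : f ∈ CSet P φ v) (hfJ : f ∈ JSet P φ) :
    ∀ f₁ ∈ CSet P φ v, ∀ f₂ ∈ CSet P φ v, ∀ t ∈ Ioo (0:ℝ) 1,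
      f = (fun x => t * f₁ x + (1 - t) * f₂ x) → f₁ = f₂ := by
  intro f₁ hf₁ f₂ hf₂ t ht heq
  obtain ⟨hmono, β, J0, J1, hβ, hJ0s, hJ1s, hc0, hc1, hdisj, hμ0, hub, hsupinf, hrep⟩ := hfJ
  have hpt : ∀ x, f x = t * f₁ x + (1 - t) * f₂ x := fun x => congrFun heq x
  have ht0 : 0 < t := ht.1
  have ht1 : 0 < 1 - t := by linarith [ht.2]
  have hval0 : ∀ x ∈ Ici (0:ℝ), x ∉ J0 → x ∉ J1 → f x = 0 := by
    intro x hx h0 h1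
    rw [hrep x hx, indicator_of_notMem h0, indicator_of_notMem h1]; ring
  have hvalβ : ∀ x ∈ J0, f x = β := by
    intro x hx
    rw [hrep x (hJ0s hx), indicator_of_mem hx,
      indicator_of_notMem (disjoint_left.mp hdisj hx)]; ring
  have hval1 : ∀ x ∈ J1, f x = 1 := by
    intro x hx
    rw [hrep x (hJ1s hx), indicator_of_notMem (disjoint_right.mp hdisj hx),
      indicator_of_mem hx]; ring
  have hr₁ := hf₁.2.1
  have hr₂ := hf₂.2.1
  have pinch0 : ∀ x ∈ Ici (0:ℝ), f x = 0 → f₁ x = 0 ∧ f₂ x = 0 := by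
    intro x hx h0
    have he := hpt x
    rw [h0] at he
    have ha1 := (hr₁ x hx).1
    have ha2 := (hr₂ x hx).1
    have k1 : 0 ≤ t * f₁ x := mul_nonneg ht0.le ha1
    have k2 : 0 ≤ (1 - t) * f₂ x := mul_nonneg ht1.le ha2
    have k3 : t * f₁ x = 0 := by linarith
    have k4 : (1 - t) * f₂ x = 0 := by linarith
    constructor
    · rcases mul_eq_zero.mp k3 with h | h
      · exact absurd h ht0.ne'
      · exact h
    · rcases mul_eq_zero.mp k4 with h | h
      · exact absurd h ht1.ne'
      · exact h
  have pinch1 : ∀ x ∈ Ici (0:ℝ), f x = 1 → f₁ x = 1 ∧ f₂ x = 1 := by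
    intro x hx h0
    have he := hpt x
    rw [h0] at he
    have ha1 := (hr₁ x hx).2
    have ha2 := (hr₂ x hx).2
    have k1 : t * f₁ x ≤ t * 1 := mul_le_mul_of_nonneg_left ha1 ht0.le
    have k2 : (1 - t) * f₂ x ≤ (1 - t) * 1 := mul_le_mul_of_nonneg_left ha2 ht1.le
    have k3 : t * f₁ x = t * 1 := by linarith
    have k4 : (1 - t) * f₂ x = (1 - t) * 1 := by linarith
    exact ⟨by field_simp at k3; exact mul_left_cancel₀ ht0.ne' (by linarith [k3]),
      mul_left_cancel₀ ht1.ne' k4⟩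
  have hconst : ∀ x ∈ J0, ∀ y ∈ J0, x ≤ y → f₁ x = f₁ y ∧ f₂ x = f₂ y := by
    intro x hx y hy hxy
    have e1 : f₁ x ≤ f₁ y := hf₁.1 (hJ0s hx) (hJ0s hy) hxy
    have e2 : f₂ x ≤ f₂ y := hf₂.1 (hJ0s hx) (hJ0s hy) hxy
    have ex := hpt x
    have ey := hpt y
    rw [hvalβ x hx] at ex
    rw [hvalβ y hy] at ey
    have k1 : t * (f₁ y - f₁ x) = (1 - t) * (f₂ x - f₂ y) := by ring_nf; linarith [ex, ey]
    have k2 : 0 ≤ t * (f₁ y - f₁ x) := mul_nonneg ht0.le (by linarith)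
    have k3 : (1 - t) * (f₂ x - f₂ y) ≤ 0 := mul_nonpos_of_nonneg_of_nonpos ht1.le (by linarith)
    have k4 : t * (f₁ y - f₁ x) = 0 := le_antisymm (by linarith) k2
    have k5 : (1 - t) * (f₂ x - f₂ y) = 0 := by linarith
    constructor
    · rcases mul_eq_zero.mp k4 with h | h
      · exact absurd h ht0.ne'
      · linarith
    · rcases mul_eq_zero.mp k5 with h | h
      · exact absurd h ht1.ne'
      · linarith
  rcases hμ0 with hJ0e | hμpos
  · -- J0 empty
    have key : ∀ x ∈ Ici (0:ℝ), f₁ x = f₂ x := by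
      intro x hx
      by_cases h1 : x ∈ J1
      · rw [(pinch1 x hx (hval1 x h1)).1, (pinch1 x hx (hval1 x h1)).2]
      · have h0 : x ∉ J0 := by rw [hJ0e]; exact notMem_empty x
        rw [(pinch0 x hx (hval0 x hx h0 h1)).1, (pinch0 x hx (hval0 x hx h0 h1)).2]
    funext x
    rcases lt_or_ge x 0 with hx | hx
    · rw [hf₁.2.2.1 x hx, hf₂.2.2.1 x hx]; exact key 0 self_mem_Ici
    · exact key x hx
  · -- μ J0 > 0
    have hJ0ne : J0.Nonempty := by
      rw [nonempty_iff_ne_empty]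
      intro h
      rw [h] at hμpos
      simp at hμpos
    obtain ⟨x₀, hx₀⟩ := hJ0ne
    have hconst' : ∀ g ∈ ({f₁, f₂} : Set (ℝ → ℝ)), True := fun _ _ => trivial
    have hc₁ : ∀ x ∈ J0, f₁ x = f₁ x₀ ∧ f₂ x = f₂ x₀ := by
      intro x hx
      rcases le_total x x₀ with h | h
      · exact hconst x hx x₀ hx₀ h
      · exact ⟨(hconst x₀ hx₀ x hx h).1.symm, (hconst x₀ hx₀ x hx h).2.symm⟩
    have hμIio : muD P φ (Iio 0) = 0 := muD_Iio_zero P φ hφm hφpos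
    have hμfin : muD P φ univ < ⊤ := muD_univ_lt_top P φ hφm hφint
    haveI : IsFiniteMeasure (muD P φ) := ⟨hμfin⟩
    have hJ0m : MeasurableSet J0 := hc0.measurableSet
    have hJ1m : MeasurableSet J1 := hc1.measurableSet
    have haeIci : ∀ᵐ x ∂(muD P φ), x ∈ Ici (0:ℝ) := by
      rw [MeasureTheory.ae_iff]
      apply measure_mono_null _ hμIio
      intro x hx
      simpa using hx
    have hint : ∀ (g : ℝ → ℝ) (c : ℝ), (∫ x, g x ∂(muD P φ)) = v →
        (∀ x ∈ J0, g x = c) → (∀ x ∈ J1, g x = 1) →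
        (∀ x ∈ Ici (0:ℝ), x ∉ J0 → x ∉ J1 → g x = 0) →
        c * (muD P φ J0).toReal + (muD P φ J1).toReal = v := by
      intro g c hgv hg0 hg1 hgz
      have hae : g =ᵐ[muD P φ] fun x => c * J0.indicator (fun _ => (1:ℝ)) x
          + J1.indicator (fun _ => (1:ℝ)) x := by
        filter_upwards [haeIci] with x hx
        by_cases h0 : x ∈ J0
        · rw [hg0 x h0, indicator_of_mem h0,
            indicator_of_notMem (disjoint_left.mp hdisj h0)]; ring
        · by_cases h1 : x ∈ J1
          · rw [hg1 x h1, indicator_of_notMem h0, indicator_of_mem h1]; ring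
          · rw [hgz x hx h0 h1, indicator_of_notMem h0, indicator_of_notMem h1]; ring
      have i0 : Integrable (fun x => J0.indicator (fun _ => (1:ℝ)) x) (muD P φ) :=
        (integrable_const (1:ℝ)).indicator hJ0m
      have i1 : Integrable (fun x => J1.indicator (fun _ => (1:ℝ)) x) (muD P φ) :=
        (integrable_const (1:ℝ)).indicator hJ1m
      have e1 : (∫ x, (c * J0.indicator (fun _ => (1:ℝ)) x
          + J1.indicator (fun _ => (1:ℝ)) x) ∂(muD P φ))
          = (∫ x, c * J0.indicator (fun _ => (1:ℝ)) x ∂(muD P φ))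
            + ∫ x, J1.indicator (fun _ => (1:ℝ)) x ∂(muD P φ) :=
        integral_add (i0.const_mul c) i1
      have e2 : (∫ x, J0.indicator (fun _ => (1:ℝ)) x ∂(muD P φ))
          = (muD P φ J0).toReal := by
        rw [integral_indicator_const (1:ℝ) hJ0m]; simp [measureReal_def]
      have e3 : (∫ x, J1.indicator (fun _ => (1:ℝ)) x ∂(muD P φ))
          = (muD P φ J1).toReal := by
        rw [integral_indicator_const (1:ℝ) hJ1m]; simp [measureReal_def]
      rw [← hgv, integral_congr_ae hae, e1, integral_const_mul, e2, e3]
    have hT : 0 < (muD P φ J0).toReal :=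
      ENNReal.toReal_pos hμpos.ne'
        ((lt_of_le_of_lt (measure_mono (subset_univ J0)) hμfin)).ne
    have r0 := hint f β hfC.2.2.2.2 hvalβ hval1 hval0
    have r1 := hint f₁ (f₁ x₀) hf₁.2.2.2.2 (fun x hx => (hc₁ x hx).1)
      (fun x hx => (pinch1 x (hJ1s hx) (hval1 x hx)).1)
      (fun x hx h0 h1 => (pinch0 x hx (hval0 x hx h0 h1)).1)
    have r2 := hint f₂ (f₂ x₀) hf₂.2.2.2.2 (fun x hx => (hc₁ x hx).2)
      (fun x hx => (pinch1 x (hJ1s hx) (hval1 x hx)).2)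
      (fun x hx h0 h1 => (pinch0 x hx (hval0 x hx h0 h1)).2)
    have hb1 : f₁ x₀ = β := by
      have : f₁ x₀ * (muD P φ J0).toReal = β * (muD P φ J0).toReal := by linarith
      exact mul_right_cancel₀ hT.ne' this
    have hb2 : f₂ x₀ = β := by
      have : f₂ x₀ * (muD P φ J0).toReal = β * (muD P φ J0).toReal := by linarith
      exact mul_right_cancel₀ hT.ne' this
    have key : ∀ x ∈ Ici (0:ℝ), f₁ x = f₂ x := by
      intro x hx
      by_cases h0 : x ∈ J0
      · rw [(hc₁ x h0).1, (hc₁ x h0).2, hb1, hb2]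
      · by_cases h1 : x ∈ J1
        · rw [(pinch1 x hx (hval1 x h1)).1, (pinch1 x hx (hval1 x h1)).2]
        · rw [(pinch0 x hx (hval0 x hx h0 h1)).1, (pinch0 x hx (hval0 x hx h0 h1)).2]
    funext x
    rcases lt_or_ge x 0 with hx | hx
    · rw [hf₁.2.2.1 x hx, hf₂.2.2.1 x hx]; exact key 0 self_mem_Ici
    · exact key x hx

lemma extreme_mem_J {Ω : Type*} [MeasurableSpace Ω] (P : Measure Ω) (φ : Ω → ℝ)
    (hφm : Measurable φ) (hφint : Integrable φ P) (hφpos : ∀ᵐ ω ∂P, 0 < φ ω) (v : ℝ)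
    {f : ℝ → ℝ} (hfC : f ∈ CSet P φ v)
    (hext : ∀ f₁ ∈ CSet P φ v, ∀ f₂ ∈ CSet P φ v, ∀ t ∈ Ioo (0:ℝ) 1,
      f = (fun x => t * f₁ x + (1 - t) * f₂ x) → f₁ = f₂) :
    f ∈ JSet P φ := by
  have hfm : Monotone f := mono_glob hfC.1 hfC.2.2.1
  have hfr : ∀ x, f x ∈ Icc (0:ℝ) 1 := range_glob hfC.2.1 hfC.2.2.1
  have hfmeas : Measurable f := hfm.measurable
  have hμIio : muD P φ (Iio 0) = 0 := muD_Iio_zero P φ hφm hφpos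
  have hμfin : muD P φ univ < ⊤ := muD_univ_lt_top P φ hφm hφint
  -- J1 and its generic properties
  set J1 : Set ℝ := {x | x ∈ Ici (0:ℝ) ∧ f x = 1} with hJ1_def
  have hJ1s : J1 ⊆ Ici 0 := fun x hx => hx.1
  have hJ1up : ∀ x ∈ J1, ∀ y, x ≤ y → y ∈ J1 := by
    intro x hx y hxy
    have hy0 : (0:ℝ) ≤ y := le_trans hx.1 hxy
    refine ⟨hy0, le_antisymm (hfr y).2 ?_⟩
    calc (1:ℝ) = f x := hx.2.symm
      _ ≤ f y := hfC.1 hx.1 hy0 hxy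
  have hc1 : J1.OrdConnected := by
    constructor
    intro x hx y _ z hz
    exact hJ1up x hx z hz.1
  have hJ1unb : J1 = ∅ ∨ ¬ BddAbove J1 := by
    rcases eq_empty_or_nonempty J1 with h | h
    · exact Or.inl h
    · right
      obtain ⟨y₀, hy₀⟩ := h
      rintro ⟨M, hM⟩
      have hmem : max y₀ M + 1 ∈ J1 :=
        hJ1up y₀ hy₀ _ (le_trans (le_max_left _ _) (by linarith))
      have := hM hmem
      have := le_max_right y₀ M
      linarith
  by_cases htwo : ∃ x₁ ∈ Ici (0:ℝ), ∃ x₂ ∈ Ici (0:ℝ),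
      f x₁ ∈ Ioo (0:ℝ) 1 ∧ f x₂ ∈ Ioo (0:ℝ) 1 ∧ f x₁ < f x₂
  · exfalso
    obtain ⟨x₁, hx₁, x₂, hx₂, hfx₁, hfx₂, hlt⟩ := htwo
    have hc₁pos : 0 < f x₁ := hfx₁.1
    have hc₁₂ : f x₁ ≤ f x₂ := hlt.le
    have hc₂1 : f x₂ ≤ 1 := hfx₂.2.le
    have i1 : Integrable (fun x => min (f x) (f x₁)) (muD P φ) := by
      apply integrable_of_bdd hμfin (hfmeas.min measurable_const)
      intro x
      rw [abs_le]
      constructor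
      · have : (0:ℝ) ≤ min (f x) (f x₁) := le_min (hfr x).1 hc₁pos.le
        linarith
      · have : min (f x) (f x₁) ≤ f x := min_le_left _ _
        linarith [(hfr x).2]
    have i2 : Integrable (fun x => min (f x) (f x₂) - min (f x) (f x₁)) (muD P φ) := by
      apply integrable_of_bdd hμfin ((hfmeas.min measurable_const).sub
        (hfmeas.min measurable_const))
      intro x
      have e0 : (0:ℝ) ≤ min (f x) (f x₁) := le_min (hfr x).1 hc₁pos.le
      have e2 : min (f x) (f x₁) ≤ min (f x) (f x₂) := min_le_min (le_refl _) hc₁₂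
      have e3 : min (f x) (f x₂) ≤ f x := min_le_left _ _
      simp only [Pi.sub_apply, abs_le]
      constructor <;> linarith [(hfr x).2]
    have i3 : Integrable (fun x => f x - min (f x) (f x₂)) (muD P φ) := by
      apply integrable_of_bdd hμfin (hfmeas.sub (hfmeas.min measurable_const))
      intro x
      have e3 : min (f x) (f x₂) ≤ f x := min_le_left _ _
      have e0 : (0:ℝ) ≤ min (f x) (f x₂) := le_min (hfr x).1 (by linarith)
      simp only [Pi.sub_apply, abs_le]
      constructor <;> linarith [(hfr x).2]
    set A₁ := ∫ x, min (f x) (f x₁) ∂(muD P φ) with hA₁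
    set A₂ := ∫ x, (min (f x) (f x₂) - min (f x) (f x₁)) ∂(muD P φ) with hA₂
    set A₃ := ∫ x, (f x - min (f x) (f x₂)) ∂(muD P φ) with hA₃
    have hsum : A₁ + (A₂ + A₃) = v := by
      have e2 : ∫ x, ((min (f x) (f x₂) - min (f x) (f x₁))
          + (f x - min (f x) (f x₂))) ∂(muD P φ) = A₂ + A₃ := integral_add i2 i3
      have e1 : ∫ x, (min (f x) (f x₁) + ((min (f x) (f x₂) - min (f x) (f x₁))
          + (f x - min (f x) (f x₂)))) ∂(muD P φ)
          = A₁ + ∫ x, ((min (f x) (f x₂) - min (f x) (f x₁))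
            + (f x - min (f x) (f x₂))) ∂(muD P φ) := integral_add i1 (i2.add i3)
      have e0 : (fun x => (min (f x) (f x₁) + ((min (f x) (f x₂) - min (f x) (f x₁))
          + (f x - min (f x) (f x₂))))) = f := funext fun x => by ring
      rw [e0] at e1
      rw [e2] at e1
      rw [← e1]
      exact hfC.2.2.2.2
    obtain ⟨a, b, d, hne, hrow1, hrow2⟩ :=
      exists_orth (f x₁) (f x₂ - f x₁) (1 - f x₂) A₁ A₂ A₃ hc₁pos.ne'
    set s : ℝ := 1 / (2 * (1 + |a| + |b| + |d|)) with hs_def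
    have hden : 0 < 1 + |a| + |b| + |d| := by positivity
    have hs : 0 < s := by rw [hs_def]; positivity
    have hsden : s * (1 + |a| + |b| + |d|) = 1 / 2 := by rw [hs_def]; field_simp
    have hbnd : ∀ r : ℝ, |r| ≤ 1 + |a| + |b| + |d| → 0 < 1 + s * r ∧ 0 < 1 - s * r := by
      intro r hr
      have k1 : s * r ≤ 1 / 2 := by
        calc s * r ≤ s * |r| := mul_le_mul_of_nonneg_left (le_abs_self r) hs.le
          _ ≤ s * (1 + |a| + |b| + |d|) := mul_le_mul_of_nonneg_left hr hs.le
          _ = 1 / 2 := hsden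
      have k3 : s * (-|r|) ≤ s * r := mul_le_mul_of_nonneg_left (neg_abs_le r) hs.le
      have k4 : s * |r| ≤ 1 / 2 := by
        calc s * |r| ≤ s * (1 + |a| + |b| + |d|) := mul_le_mul_of_nonneg_left hr hs.le
          _ = 1 / 2 := hsden
      have k5 : s * (-|r|) = -(s * |r|) := by ring
      constructor <;> linarith
    obtain ⟨hap, han⟩ := hbnd a (by linarith [abs_nonneg b, abs_nonneg d])
    obtain ⟨hbp, hbn⟩ := hbnd b (by linarith [abs_nonneg a, abs_nonneg d])
    obtain ⟨hdp, hdn⟩ := hbnd d (by linarith [abs_nonneg a, abs_nonneg b])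
    have hCp := memC_perturb P φ hφm hφint v hfC hc₁pos hc₁₂ hc₂1 hap hbp hdp
      (by linear_combination s * hrow1)
      (by rw [← hA₁, ← hA₂, ← hA₃]; linear_combination hsum + s * hrow2)
    have hCm := memC_perturb P φ hφm hφint v hfC hc₁pos hc₁₂ hc₂1 han hbn hdn
      (by linear_combination (-s) * hrow1)
      (by rw [← hA₁, ← hA₂, ← hA₃]; linear_combination hsum - s * hrow2)
    have heq := hext _ hCp _ hCm (1/2) (by constructor <;> norm_num)
      (funext fun x => by ring)
    have q1 := congrFun heq x₁
    have q2 := congrFun heq x₂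
    rw [min_self, min_eq_left hc₁₂] at q1
    rw [min_self, inf_eq_right.mpr hc₁₂] at q2
    have ha0 : a = 0 := by
      by_contra ha
      have hne0 : s * a * f x₁ ≠ 0 := mul_ne_zero (mul_ne_zero hs.ne' ha) hc₁pos.ne'
      exact hne0 (by linear_combination q1 / 2)
    have hb0 : b = 0 := by
      by_contra hb
      have hne0 : s * b * (f x₂ - f x₁) ≠ 0 :=
        mul_ne_zero (mul_ne_zero hs.ne' hb) (sub_ne_zero.mpr hlt.ne')
      exact hne0 (by linear_combination q2 / 2 - s * f x₁ * ha0)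
    have hd0 : d = 0 := by
      have : d * (1 - f x₂) = 0 := by linear_combination hrow1 - f x₁ * ha0 - (f x₂ - f x₁) * hb0
      rcases mul_eq_zero.mp this with h | h
      · exact h
      · exact absurd h (sub_ne_zero.mpr hfx₂.2.ne')
    exact hne ⟨ha0, hb0, hd0⟩
  · push_neg at htwo
    by_cases hone : ∃ x₀ ∈ Ici (0:ℝ), f x₀ ∈ Ioo (0:ℝ) 1
    · obtain ⟨x₀, hx₀, hβx⟩ := hone
      have hval : ∀ x ∈ Ici (0:ℝ), f x = 0 ∨ f x = f x₀ ∨ f x = 1 := by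
        intro x hx
        by_cases hmem : f x ∈ Ioo (0:ℝ) 1
        · exact Or.inr (Or.inl (le_antisymm (htwo x₀ hx₀ x hx hβx hmem)
            (htwo x hx x₀ hx₀ hmem hβx)))
        · have h01 := hfr x
          rcases lt_or_ge 0 (f x) with hpos | hnp
          · right; right
            rcases lt_or_ge (f x) 1 with hl | hg
            · exact absurd ⟨hpos, hl⟩ hmem
            · exact le_antisymm h01.2 hg
          · exact Or.inl (le_antisymm hnp h01.1)
      set β := f x₀ with hβ_def
      set J0 : Set ℝ := {x | x ∈ Ici (0:ℝ) ∧ f x = β} with hJ0_def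
      have hJ0s : J0 ⊆ Ici 0 := fun x hx => hx.1
      have hc0 : J0.OrdConnected := by
        constructor
        intro x hx y hy z hz
        have hz0 : (0:ℝ) ≤ z := le_trans hx.1 hz.1
        refine ⟨hz0, le_antisymm ?_ ?_⟩
        · calc f z ≤ f y := hfC.1 hz0 hy.1 hz.2
            _ = β := hy.2
        · calc β = f x := hx.2.symm
            _ ≤ f z := hfC.1 hx.1 hz0 hz.1
      have hdisj : Disjoint J0 J1 := by
        rw [disjoint_left]
        rintro x ⟨-, hx2⟩ ⟨-, hx2'⟩
        rw [hx2'] at hx2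
        exact hβx.2.ne' hx2
      have hsupinf : J0.Nonempty → J1.Nonempty → sSup J0 = sInf J1 := by
        intro h0 h1
        obtain ⟨y₁, hy₁⟩ := id h1
        have hlt : ∀ x ∈ J0, ∀ y ∈ J1, x < y := by
          intro x hx y hy
          by_contra h
          push_neg at h
          have := hfC.1 hy.1 hx.1 h
          rw [hx.2, hy.2] at this
          exact absurd this (not_le.mpr hβx.2)
        have hbddJ0 : BddAbove J0 := ⟨y₁, fun x hx => (hlt x hx y₁ hy₁).le⟩
        have hbddJ1 : BddBelow J1 := ⟨0, fun y hy => hy.1⟩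
        refine le_antisymm (csSup_le h0 fun x hx => le_csInf h1 fun y hy => (hlt x hx y hy).le) ?_
        by_contra h
        push_neg at h
        set z := (sSup J0 + sInf J1) / 2 with hz_def
        obtain ⟨x₁, hx₁⟩ := h0
        have hx₁le : x₁ ≤ sSup J0 := le_csSup hbddJ0 hx₁
        have hz1 : sSup J0 < z := by rw [hz_def]; linarith
        have hz2 : z < sInf J1 := by rw [hz_def]; linarith
        have hz0 : (0:ℝ) ≤ z := le_trans hx₁.1 (le_trans hx₁le hz1.le)
        have hfz : β ≤ f z := by
          calc β = f x₁ := hx₁.2.symm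
            _ ≤ f z := hfC.1 hx₁.1 hz0 (le_trans hx₁le hz1.le)
        rcases hval z hz0 with h' | h' | h'
        · rw [h'] at hfz; exact absurd hfz (not_le.mpr hβx.1)
        · have : z ∈ J0 := ⟨hz0, h'⟩
          have := le_csSup hbddJ0 this
          linarith
        · have : z ∈ J1 := ⟨hz0, h'⟩
          have := csInf_le hbddJ1 this
          linarith
      by_cases hμJ0 : 0 < muD P φ J0
      · refine ⟨hfC.1, β, J0, J1, hβx, hJ0s, hJ1s, hc0, hc1, hdisj, Or.inr hμJ0,
          hJ1unb, hsupinf, ?_⟩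
        intro x hx
        rcases hval x hx with h | h | h
        · have h0 : x ∉ J0 := fun hx' => by rw [hx'.2] at h; exact hβx.1.ne' h
          have h1 : x ∉ J1 := fun hx' => by rw [hx'.2] at h; norm_num at h
          rw [h, indicator_of_notMem h0, indicator_of_notMem h1]; ring
        · have h0 : x ∈ J0 := ⟨hx, h⟩
          rw [h, indicator_of_mem h0, indicator_of_notMem (disjoint_left.mp hdisj h0)]
          ring
        · have h1 : x ∈ J1 := ⟨hx, h⟩
          have h0 : x ∉ J0 := disjoint_right.mp hdisj h1
          rw [h, indicator_of_notMem h0, indicator_of_mem h1]; ring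
      · exfalso
        have hμ0 : muD P φ J0 = 0 := by
          rcases (eq_or_lt_of_le (show (0:ENNReal) ≤ muD P φ J0 by simp)) with h | h
          · exact h.symm
          · exact absurd h hμJ0
        have hvalG : ∀ x, f x = 0 ∨ f x = β ∨ f x = 1 := by
          intro x
          rcases lt_or_ge x 0 with hx | hx
          · rw [hfC.2.2.1 x hx]; exact hval 0 self_mem_Ici
          · exact hval x hx
        have hnull : muD P φ {x | f x = β} = 0 := by
          have hsub : {x : ℝ | f x = β} ⊆ J0 ∪ Iio 0 := by
            intro x hx
            rcases lt_or_ge x 0 with h | h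
            · exact Or.inr h
            · exact Or.inl ⟨h, hx⟩
          exact measure_mono_null hsub (measure_union_null hμ0 hμIio)
        set σ := min β (1 - β) / 2 with hσ_def
        have hσpos : 0 < σ := by
          rw [hσ_def]
          exact div_pos (lt_min hβx.1 (by linarith [hβx.2])) two_pos
        have hσβ : σ ≤ β := by
          rw [hσ_def]; have := min_le_left β (1 - β); linarith [hσpos]
        have hσβ' : σ ≤ 1 - β := by
          rw [hσ_def]
          have h1 := min_le_right β (1 - β)
          have h2 : 0 < min β (1 - β) := lt_min hβx.1 (by linarith [hβx.2])
          linarith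
        have gp := memC_shift P φ v hfC hβx (show -β ≤ σ by linarith)
          (show σ ≤ 1 - β from hσβ') hvalG hnull
        have gm := memC_shift P φ v hfC hβx (show -β ≤ -σ by linarith)
          (show -σ ≤ 1 - β by linarith) hvalG hnull
        have heq := hext _ gp _ gm (1/2) (by constructor <;> norm_num)
          (funext fun x => by
            by_cases h : f x = β
            · rw [if_pos h, if_pos h, h]; ring
            · rw [if_neg h, if_neg h]; ring)
        have hfx₀β : f x₀ = β := hβ_def.symm
        have hq := congrFun heq x₀
        rw [if_pos hfx₀β, if_pos hfx₀β] at hq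
        linarith
    · push_neg at hone
      have hval2 : ∀ x ∈ Ici (0:ℝ), f x = 0 ∨ f x = 1 := by
        intro x hx
        have h01 := hfr x
        have hno := hone x hx
        rcases lt_or_ge 0 (f x) with hpos | hnp
        · rcases lt_or_ge (f x) 1 with hl | hg
          · exact absurd ⟨hpos, hl⟩ hno
          · exact Or.inr (le_antisymm h01.2 hg)
        · exact Or.inl (le_antisymm hnp h01.1)
      refine ⟨hfC.1, 1/2, ∅, J1, by norm_num, empty_subset _, hJ1s,
        Set.ordConnected_empty, hc1, empty_disjoint _, Or.inl rfl, hJ1unb,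
        fun h _ => absurd h (by simp), ?_⟩
      intro x hx
      rcases hval2 x hx with h | h
      · have h1 : x ∉ J1 := fun hx' => by rw [hx'.2] at h; norm_num at h
        rw [h, indicator_of_notMem h1]
        simp
      · have h1 : x ∈ J1 := ⟨hx, h⟩
        rw [h, indicator_of_mem h1]
        simp

/-- Lemma 5.1: the set of extreme points of `C` is exactly `C ∩ 𝒥`:
`f ∈ C` cannot be written as a nontrivial convex combination `f = t f₁ + (1−t) f₂` of two
distinct elements of `C` if and only if `f ∈ 𝒥`. -/
theorem extreme_points_of_C
    {Ω : Type*} [MeasurableSpace Ω] (P : Measure Ω) [IsProbabilityMeasure P]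
    (hP : Atomless P)
    (φ : Ω → ℝ) (hφm : Measurable φ) (hφint : Integrable φ P)
    (hφpos : ∀ᵐ ω ∂P, 0 < φ ω) (hφ1 : ∫ ω, φ ω ∂P = 1)
    (v : ℝ) (hv : v ∈ Icc (0:ℝ) 1) :
    {f ∈ CSet P φ v | ∀ f₁ ∈ CSet P φ v, ∀ f₂ ∈ CSet P φ v, ∀ t ∈ Ioo (0:ℝ) 1,
        f = (fun x => t * f₁ x + (1 - t) * f₂ x) → f₁ = f₂}
      = CSet P φ v ∩ JSet P φ := by
  ext f
  simp only [Set.mem_setOf_eq, Set.mem_inter_iff, Set.mem_sep_iff]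
  constructor
  · rintro ⟨hfC, hext⟩
    exact ⟨hfC, extreme_mem_J P φ hφm hφint hφpos v hfC hext⟩
  · rintro ⟨hfC, hfJ⟩
    exact ⟨hfC, jset_extreme P φ hφm hφint hφpos v hfC hfJ⟩
end
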